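/- arXiv:math/9706212 — 2 statements merged into one kernel-verified Lean document; each statement's English description precedes it below -/
import Mathlib

section
/- Let E be an m-dimensional Banach space with a normalized 1-unconditional basis (e_k) and biorthogonal functionals (e_k^*), and let n_1,…,n_m be positive integers with n = ∑_k n_k. Then there exist nonnegative reals α_1,…,α_m and β_1,…,β_m with ‖∑_k α_k e_k^*‖_{E^*} = 1 = ‖∑_k β_k e_k‖_E and ∏_{k=1}^m (α_k β_k / n_k)^{n_k} ≥ n^{-n}. -/
open MeasureTheory ENNReal

noncomputable section

/-- `N` is a norm on the real vector space `V`. -/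
structure IsNorm {V : Type*} [AddCommGroup V] [Module ℝ V] (N : V → ℝ) : Prop where
  add_le : ∀ x y, N (x + y) ≤ N x + N y
  smul_eq : ∀ (c : ℝ) (x : V), N (c • x) = |c| * N x
  definite : ∀ x, N x = 0 → x = 0

/-- dual norm of the coordinate functional `t ↦ ∑ a k * t k` relative to `N`. -/
noncomputable def coordDualNorm {m : ℕ} (N : (Fin m → ℝ) → ℝ) (a : Fin m → ℝ) : ℝ :=
  sSup {r | ∃ t, N t ≤ 1 ∧ r = |∑ k, a k * t k|}

-- auxiliary lemmas
variable {V : Type*} [AddCommGroup V] [Module ℝ V] {N : V → ℝ}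

lemma IsNorm.zero (h : IsNorm N) : N 0 = 0 := by
  have := h.smul_eq 0 0; simpa using this

lemma IsNorm.neg (h : IsNorm N) (x : V) : N (-x) = N x := by
  have := h.smul_eq (-1) x; simpa using this

lemma IsNorm.nonneg (h : IsNorm N) (x : V) : 0 ≤ N x := by
  have h1 := h.add_le x (-x)
  rw [add_neg_cancel, h.zero, h.neg] at h1
  linarith

lemma IsNorm.sum_le (h : IsNorm N) {ι : Type*} (s : Finset ι) (f : ι → V) :
    N (∑ i ∈ s, f i) ≤ ∑ i ∈ s, N (f i) := by
  classical
  induction s using Finset.induction with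
  | empty => simp [h.zero]
  | insert _ _ hx ih =>
    rw [Finset.sum_insert hx, Finset.sum_insert hx]
    exact (h.add_le _ _).trans (by linarith)

section Pi
variable {m : ℕ} {NE : (Fin m → ℝ) → ℝ}

lemma NE_le_sum (hNE : IsNorm NE) (hnormalized : ∀ k, NE (Pi.single k 1) = 1)
    (t : Fin m → ℝ) : NE t ≤ ∑ k, |t k| := by
  set g : Fin m → (Fin m → ℝ) := fun k => (t k) • (Pi.single k 1 : Fin m → ℝ) with hg
  have ht : t = ∑ k, g k := by
    funext j
    simp [hg, Finset.sum_apply, Pi.single_apply, mul_ite]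
  calc NE t = NE (∑ k, g k) := by rw [← ht]
    _ ≤ ∑ k, NE (g k) := hNE.sum_le _ _
    _ = ∑ k, |t k| := by
        refine Finset.sum_congr rfl fun k _ => ?_
        rw [hg]
        simp only
        rw [hNE.smul_eq, hnormalized k, mul_one]

lemma NE_continuous (hNE : IsNorm NE) (hnormalized : ∀ k, NE (Pi.single k 1) = 1) :
    Continuous NE := by
  have key : ∀ x y : Fin m → ℝ, |NE x - NE y| ≤ ∑ k, |x k - y k| := by
    intro x y
    have h1 : NE x ≤ NE y + NE (x - y) := by
      have := hNE.add_le y (x - y); simpa using this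
    have h2 : NE y ≤ NE x + NE (x - y) := by
      have := hNE.add_le x (y - x)
      have hn : NE (y - x) = NE (x - y) := by
        rw [← hNE.neg (x - y)]; congr 1; abel
      rw [hn] at this; simpa using this
    have h3 : NE (x - y) ≤ ∑ k, |x k - y k| := by
      simpa using NE_le_sum hNE hnormalized (x - y)
    rw [abs_sub_le_iff]; constructor <;> linarith
  rw [Metric.continuous_iff]
  intro x ε hε
  rcases Nat.eq_zero_or_pos m with hm | hm
  · refine ⟨1, one_pos, fun y _ => ?_⟩
    rw [Real.dist_eq]
    have h0 : ∑ k, |y k - x k| = 0 := by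
      subst hm; simp
    calc |NE y - NE x| ≤ 0 := (key y x).trans h0.le
      _ < ε := hε
  · refine ⟨ε / m, by positivity, fun y hy => ?_⟩
    have hb : ∑ k, |y k - x k| ≤ (m:ℝ) * dist y x := by
      calc ∑ k, |y k - x k| ≤ ∑ _k : Fin m, dist y x := by
            refine Finset.sum_le_sum fun k _ => ?_
            simpa [Real.dist_eq] using dist_le_pi_dist y x k
        _ = (m:ℝ) * dist y x := by
            rw [Finset.sum_const, Finset.card_univ, Fintype.card_fin, nsmul_eq_mul]
    have hlt : (m:ℝ) * dist y x < (m:ℝ) * (ε / m) :=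
      mul_lt_mul_of_pos_left hy (by positivity)
    have heq : (m:ℝ) * (ε / m) = ε := by
      field_simp
    rw [Real.dist_eq]
    calc |NE y - NE x| ≤ ∑ k, |y k - x k| := key y x
      _ ≤ (m:ℝ) * dist y x := hb
      _ < ε := by rw [← heq]; exact hlt

section Pi2
variable {m : ℕ} {NE : (Fin m → ℝ) → ℝ}

lemma update_zero_le (hNE : IsNorm NE)
    (hu : ∀ ε t : Fin m → ℝ, (∀ k, |ε k| = 1) → NE (ε * t) = NE t)
    (t : Fin m → ℝ) (k : Fin m) : NE (Function.update t k 0) ≤ NE t := by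
  set ε : Fin m → ℝ := fun j => if j = k then -1 else 1 with hε
  have hε1 : ∀ j, |ε j| = 1 := fun j => by by_cases h : j = k <;> simp [hε, h]
  have hdec : Function.update t k 0 = (1/2 : ℝ) • t + (1/2 : ℝ) • (ε * t) := by
    funext j
    by_cases h : j = k
    · subst h; simp [hε]
    · simp only [Function.update_of_ne h, Pi.add_apply, Pi.smul_apply, Pi.mul_apply,
        smul_eq_mul, hε]
      rw [if_neg h]; ring
  rw [hdec]
  calc NE _ ≤ NE ((1/2:ℝ) • t) + NE ((1/2:ℝ) • (ε * t)) := hNE.add_le _ _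
    _ = (1/2) * NE t + (1/2) * NE (ε * t) := by
        rw [hNE.smul_eq, hNE.smul_eq, abs_of_pos (by norm_num : (0:ℝ) < 1/2)]
    _ = NE t := by rw [hu ε t hε1]; ring

lemma abs_coord_le (hNE : IsNorm NE)
    (hu : ∀ ε t : Fin m → ℝ, (∀ k, |ε k| = 1) → NE (ε * t) = NE t)
    (hnormalized : ∀ k, NE (Pi.single k 1) = 1)
    (t : Fin m → ℝ) (k : Fin m) : |t k| ≤ NE t := by
  classical
  have main : ∀ S : Finset (Fin m), NE (fun j => if j ∈ S then 0 else t j) ≤ NE t := by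
    intro S
    induction S using Finset.induction with
    | empty => simp
    | @insert a S ha ih =>
      have heq : (fun j => if j ∈ insert a S then 0 else t j)
          = Function.update (fun j => if j ∈ S then 0 else t j) a 0 := by
        funext j
        by_cases h : j = a
        · subst h; simp [ha]
        · simp [Function.update_of_ne h, Finset.mem_insert, h]
      rw [heq]
      exact (update_zero_le hNE hu _ a).trans ih
  have h1 := main (Finset.univ.erase k)
  have heq2 : (fun j => if j ∈ Finset.univ.erase k then 0 else t j)
      = (t k) • (Pi.single k 1 : Fin m → ℝ) := by
    funext j
    by_cases h : j = k
    · subst h; simp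
    · simp [Finset.mem_erase, h, Pi.single_apply]
  rw [heq2, hNE.smul_eq, hnormalized k, mul_one] at h1
  exact h1

end Pi2

lemma key_deriv {m : ℕ} (n : Fin m → ℕ) (y : Fin m → ℝ)
    (h : ∀ s ∈ Set.Icc (0:ℝ) 1, (∏ k, (1 + s * y k) ^ (n k)) ≤ 1) :
    ∑ k, (n k : ℝ) * y k ≤ 0 := by
  classical
  set f : ℝ → ℝ := fun s => ∏ k, (1 + s * y k) ^ (n k) with hf
  have hf0 : f 0 = 1 := by simp [hf]
  have hmaxon : IsMaxOn f (Set.Icc (0:ℝ) 1) 0 := by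
    intro s hs
    have h1 : f s ≤ 1 := h s hs
    simpa [hf0] using h1
  have hmax : IsLocalMaxOn f (Set.Icc (0:ℝ) 1) 0 := hmaxon.filter_mono inf_le_right
  have hder : ∀ k ∈ Finset.univ, HasDerivAt (fun s : ℝ => (1 + s * y k) ^ (n k))
      ((n k : ℝ) * y k) 0 := by
    intro k _
    have h1 : HasDerivAt (fun s : ℝ => 1 + s * y k) (y k) 0 := by
      simpa using (hasDerivAt_mul_const (y k)).const_add 1
    have h2 : HasDerivAt (fun s : ℝ => (1 + s * y k) ^ (n k)) _ 0 := h1.pow (n k)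
    simpa using h2
  have hprod := HasDerivAt.fun_finsetProd hder
  have hsimp : (∑ k, (∏ j ∈ Finset.univ.erase k, ((1:ℝ) + 0 * y j) ^ (n j)) •
      ((n k : ℝ) * y k)) = ∑ k, (n k : ℝ) * y k := by simp
  rw [hsimp] at hprod
  have hcone : (1:ℝ) ∈ posTangentConeAt (Set.Icc (0:ℝ) 1) 0 := by
    apply mem_posTangentConeAt_of_segment_subset
    rw [show (0:ℝ) + 1 = 1 by norm_num, segment_eq_Icc (by norm_num : (0:ℝ) ≤ 1)]
  have hfinal := hmax.hasFDerivWithinAt_nonpos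
    (hprod.hasFDerivAt.hasFDerivWithinAt) hcone
  simpa using hfinal

end Pi


/-- **Lemma 2.3** (Lozanovskii-type weights). For an `m`-dimensional space `E` with a
normalized 1-unconditional basis `(e_k)` with biorthogonal functionals `(e_k^*)` and positive
integers `n_1, …, n_m` with `n = ∑ n_k`, there are `α_k, β_k ≥ 0` with
`‖∑ α_k e_k^*‖ = 1 = ‖∑ β_k e_k‖` and `∏ (α_k β_k / n_k)^{n_k} ≥ n^{-n}`
(stated multiplicatively: `∏ n_k^{n_k} ≤ n^n ∏ (α_k β_k)^{n_k}`). -/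
theorem lozanovskii_weights
    (m : ℕ) (hm : 0 < m) (n : Fin m → ℕ) (hn : ∀ k, 0 < n k)
    (NE : (Fin m → ℝ) → ℝ) (hNE : IsNorm NE)
    (hu : ∀ ε t : Fin m → ℝ, (∀ k, |ε k| = 1) → NE (ε * t) = NE t)
    (hnormalized : ∀ k, NE (Pi.single k 1) = 1) :
    ∃ α β : Fin m → ℝ, (∀ k, 0 ≤ α k) ∧ (∀ k, 0 ≤ β k) ∧
      coordDualNorm NE α = 1 ∧ NE β = 1 ∧
      (∏ k, (n k : ℝ) ^ (n k : ℕ)) ≤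
        ((∑ k, n k : ℕ) : ℝ) ^ (∑ k, n k : ℕ) * ∏ k, (α k * β k) ^ (n k : ℕ) := by
  classical
  set N : ℕ := ∑ k, n k with hN
  have hNpos : 0 < N := Finset.sum_pos (fun k _ => hn k) ⟨⟨0, hm⟩, Finset.mem_univ _⟩
  have hNR : (0:ℝ) < N := by exact_mod_cast hNpos
  set K : Set (Fin m → ℝ) := {t | (∀ k, 0 ≤ t k) ∧ NE t ≤ 1} with hK
  have hcont := NE_continuous hNE hnormalized
  have hKclosed : IsClosed K := by
    have h1 : K = (⋂ k, {t : Fin m → ℝ | 0 ≤ t k}) ∩ NE ⁻¹' (Set.Iic 1) := by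
      ext t; simp [hK, Set.mem_iInter]
    rw [h1]
    exact (isClosed_iInter fun k =>
      isClosed_le continuous_const (continuous_apply k)).inter
      (IsClosed.preimage hcont isClosed_Iic)
  have hKsub : K ⊆ Set.Icc (0 : Fin m → ℝ) 1 := by
    intro t ht
    refine ⟨fun k => ht.1 k, fun k => ?_⟩
    exact (le_abs_self _).trans ((abs_coord_le hNE hu hnormalized t k).trans ht.2)
  have hKcompact : IsCompact K := (isCompact_Icc).of_isClosed_subset hKclosed hKsub
  have hK0 : (0 : Fin m → ℝ) ∈ K := ⟨fun k => le_refl 0, by rw [hNE.zero]; norm_num⟩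
  set G : (Fin m → ℝ) → ℝ := fun t => ∏ k, (t k) ^ (n k) with hG
  have hGcont : Continuous G := continuous_finset_prod _ fun k _ => (continuous_apply k).pow _
  obtain ⟨β, hβK, hβmax⟩ := hKcompact.exists_isMaxOn ⟨0, hK0⟩ hGcont.continuousOn
  -- positivity of G β
  have hone : (0:ℝ) < NE (fun _ => 1) := by
    have := abs_coord_le hNE hu hnormalized (fun _ => (1:ℝ)) ⟨0, hm⟩
    simp only [abs_one] at this
    linarith
  set c : ℝ := (NE (fun _ => 1))⁻¹ with hc
  have hcpos : 0 < c := inv_pos.mpr hone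
  have ht0K : (fun _ : Fin m => c) ∈ K := by
    refine ⟨fun k => hcpos.le, ?_⟩
    have hsm : (fun _ : Fin m => c) = c • (fun _ : Fin m => (1:ℝ)) := by
      funext j; simp
    rw [hsm, hNE.smul_eq, abs_of_pos hcpos, hc, inv_mul_cancel₀ hone.ne']
  have hGβpos : 0 < G β := by
    refine lt_of_lt_of_le ?_ (hβmax ht0K)
    exact Finset.prod_pos fun k _ => pow_pos hcpos _
  have hβpos : ∀ k, 0 < β k := by
    intro k
    rcases (hβK.1 k).lt_or_eq with h | h
    · exact h
    · exfalso
      have : G β = 0 := by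
        rw [hG]
        exact Finset.prod_eq_zero (Finset.mem_univ k)
          (by rw [← h]; exact zero_pow (hn k).ne')
      rw [this] at hGβpos; exact lt_irrefl 0 hGβpos
  have hNEβpos : 0 < NE β := by
    rcases (hNE.nonneg β).lt_or_eq with h | h
    · exact h
    · exfalso
      have hβ0 := hNE.definite β h.symm
      have := hβpos ⟨0, hm⟩
      rw [hβ0] at this
      exact lt_irrefl 0 (by simpa using this)
  have hNEβ : NE β = 1 := by
    by_contra hne
    have hlt : NE β < 1 := lt_of_le_of_ne hβK.2 hne
    set d : ℝ := (NE β)⁻¹ with hd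
    have hd1 : 1 < d := (one_lt_inv₀ hNEβpos).mpr hlt
    have hdK : d • β ∈ K := by
      refine ⟨fun k => mul_nonneg (by positivity) (hβK.1 k), ?_⟩
      rw [hNE.smul_eq, abs_of_pos (by positivity), hd, inv_mul_cancel₀ hNEβpos.ne']
    have hcontr := hβmax hdK
    have hGd : G (d • β) = d ^ N * G β := by
      show (∏ k, ((d • β) k) ^ (n k)) = d ^ N * ∏ k, (β k) ^ (n k)
      simp only [Pi.smul_apply, smul_eq_mul, mul_pow]
      rw [Finset.prod_mul_distrib, Finset.prod_pow_eq_pow_sum, ← hN]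
    have hdN : 1 < d ^ N := one_lt_pow₀ hd1 hNpos.ne'
    have : G β < d ^ N * G β := by nlinarith
    rw [← hGd] at this
    exact absurd hcontr (not_le.mpr this)
  -- key inequality
  have hkey : ∀ t ∈ K, ∑ k, (n k : ℝ) * (t k / β k) ≤ N := by
    intro t ht
    set y : Fin m → ℝ := fun k => t k / β k - 1 with hy
    have happ : ∀ s ∈ Set.Icc (0:ℝ) 1, (∏ k, (1 + s * y k) ^ (n k)) ≤ 1 := by
      intro s hs
      obtain ⟨hs0, hs1⟩ := hs
      set u : Fin m → ℝ := fun k => β k * (1 + s * y k) with huu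
      have hucoord : ∀ k, u k = (1 - s) * β k + s * t k := by
        intro k
        have hβk := (hβpos k).ne'
        show β k * (1 + s * (t k / β k - 1)) = (1 - s) * β k + s * t k
        field_simp
        ring
      have huK : u ∈ K := by
        constructor
        · intro k
          rw [hucoord k]
          have := hβK.1 k
          have := ht.1 k
          nlinarith
        · have hdecomp : u = (1 - s) • β + s • t := by
            funext k; rw [hucoord k]; simp
          rw [hdecomp]
          calc NE ((1-s) • β + s • t) ≤ NE ((1-s) • β) + NE (s • t) := hNE.add_le _ _
            _ = (1-s) * NE β + s * NE t := by
                rw [hNE.smul_eq, hNE.smul_eq, abs_of_nonneg (by linarith),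
                  abs_of_nonneg hs0]
            _ ≤ (1-s) * 1 + s * 1 := by
                have h1 := hβK.2
                have h2 := ht.2
                have h3 := hNE.nonneg β
                have h4 := hNE.nonneg t
                nlinarith
            _ = 1 := by ring
      have hGu : G u ≤ G β := hβmax huK
      have hGueq : G u = G β * ∏ k, (1 + s * y k) ^ (n k) := by
        rw [hG]
        simp only [huu, mul_pow]
        rw [Finset.prod_mul_distrib]
      rw [hGueq] at hGu
      exact (mul_le_iff_le_one_right hGβpos).mp hGu
    have hder := key_deriv n y happ
    have hexp : ∑ k, (n k:ℝ) * y k = (∑ k, (n k:ℝ) * (t k / β k)) - N := by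
      simp only [hy, mul_sub, mul_one, Finset.sum_sub_distrib]
      congr 1
      rw [hN]
      push_cast
      rfl
    linarith [hexp ▸ hder]
  -- define α
  set α : Fin m → ℝ := fun k => (n k : ℝ) / (N * β k) with hα
  have hαnn : ∀ k, 0 ≤ α k := by
    intro k
    rw [hα]
    have := hβpos k
    positivity
  have hαβ : ∀ k, α k * β k = (n k : ℝ) / N := by
    intro k
    rw [hα]
    have hβk := (hβpos k).ne'
    field_simp
  have hcast : (N:ℝ) = ∑ k, (n k:ℝ) := by rw [hN]; push_cast; rfl
  have hsum1 : ∑ k, α k * β k = 1 := by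
    calc ∑ k, α k * β k = ∑ k, (n k:ℝ) / N := Finset.sum_congr rfl fun k _ => hαβ k
      _ = (∑ k, (n k:ℝ)) / N := (Finset.sum_div _ _ _).symm
      _ = 1 := by rw [← hcast, div_self hNR.ne']
  have hbound : ∀ t, NE t ≤ 1 → |∑ k, α k * t k| ≤ 1 := by
    intro t ht
    set ε : Fin m → ℝ := fun k => if 0 ≤ t k then 1 else -1 with hε
    have hε1 : ∀ k, |ε k| = 1 := fun k => by
      by_cases h : 0 ≤ t k <;> simp [hε, h]
    have habs : (fun k => |t k|) ∈ K := by
      constructor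
      · exact fun k => abs_nonneg _
      · have heq : (fun k => |t k|) = ε * t := by
          funext k
          by_cases h : 0 ≤ t k
          · simp [hε, h, abs_of_nonneg h]
          · simp [hε, h, abs_of_neg (not_le.mp h)]
        rw [heq, hu ε t hε1]
        exact ht
    have h2 := hkey _ habs
    calc |∑ k, α k * t k| ≤ ∑ k, |α k * t k| := Finset.abs_sum_le_sum_abs _ _
      _ = ∑ k, α k * |t k| := by
          refine Finset.sum_congr rfl fun k _ => ?_
          rw [abs_mul, abs_of_nonneg (hαnn k)]
      _ = (N:ℝ)⁻¹ * ∑ k, (n k:ℝ) * (|t k| / β k) := by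
          rw [Finset.mul_sum]
          refine Finset.sum_congr rfl fun k _ => ?_
          rw [hα]
          have hβk := (hβpos k).ne'
          field_simp
      _ ≤ (N:ℝ)⁻¹ * N := by
          exact mul_le_mul_of_nonneg_left h2 (by positivity)
      _ = 1 := by field_simp
  have hdual : coordDualNorm NE α = 1 := by
    unfold coordDualNorm
    have hmem : (1:ℝ) ∈ {r | ∃ t, NE t ≤ 1 ∧ r = |∑ k, α k * t k|} := by
      exact ⟨β, hNEβ.le, by rw [hsum1, abs_one]⟩
    apply le_antisymm
    · apply csSup_le ⟨1, hmem⟩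
      rintro r ⟨t, ht1, rfl⟩
      exact hbound t ht1
    · apply le_csSup
      · exact ⟨1, by rintro r ⟨t, ht1, rfl⟩; exact hbound t ht1⟩
      · exact hmem
  refine ⟨α, β, hαnn, fun k => (hβpos k).le, hdual, hNEβ, ?_⟩
  have hprodeq : ∏ k, (α k * β k) ^ (n k) = (∏ k, (n k:ℝ) ^ (n k)) / (N:ℝ) ^ N := by
    calc ∏ k, (α k * β k) ^ (n k) = ∏ k, ((n k:ℝ) / N) ^ (n k) := by
          exact Finset.prod_congr rfl fun k _ => by rw [hαβ k]
      _ = (∏ k, (n k:ℝ) ^ (n k)) / ∏ k, (N:ℝ) ^ (n k) := by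
          rw [← Finset.prod_div_distrib]
          exact Finset.prod_congr rfl fun k _ => by rw [div_pow]
      _ = (∏ k, (n k:ℝ) ^ (n k)) / (N:ℝ) ^ N := by
          rw [Finset.prod_pow_eq_pow_sum, ← hN]
  have hfin : ((N:ℝ)) ^ N * ((∏ k, (n k:ℝ) ^ (n k)) / (N:ℝ) ^ N)
      = ∏ k, (n k:ℝ) ^ (n k) := by
    field_simp
  rw [hprodeq, hfin]

end
end

section
/- Let 1 ≤ p < ∞, let E be a Banach space with normalized 1-unconditional basis (e_j) and biorthogonal functionals (e_j^*) such that E^* is p-convex with constant K^p(E^*). Let (X_n) be Banach spaces, Z a Banach space, and T : (∑_n X_n)_E → Z a p-summing operator, with restrictions T_n = T|_{X_n}. Then for every m, ‖∑_{j=1}^m π_p(T_j) e_j^*‖_{E^*} ≤ K^p(E^*) π_p(T). -/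
open MeasureTheory ENNReal

noncomputable section

/-- the dual norm of a linear functional relative to the norm `N`. -/
noncomputable def dualNorm {V : Type*} [AddCommGroup V] [Module ℝ V] (N : V → ℝ)
    (f : Module.Dual ℝ V) : ℝ :=
  sInf {c | 0 ≤ c ∧ ∀ x, |f x| ≤ c * N x}

/-- `T` is `p`-summing with constant `C`, relative to norms `NV`, `NW` (`p` finite). -/
def SummingBoundR {V W : Type*} [AddCommGroup V] [Module ℝ V] [AddCommGroup W] [Module ℝ W]
    (p : ℝ) (NV : V → ℝ) (NW : W → ℝ) (T : V →ₗ[ℝ] W) (C : ℝ) : Prop :=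
  ∀ (n : ℕ) (x : Fin n → V) (D : ℝ), 0 ≤ D →
    (∀ f : Module.Dual ℝ V, (∀ v, |f v| ≤ NV v) → (∑ i, |f (x i)| ^ p) ^ (1 / p) ≤ D) →
    (∑ i, NW (T (x i)) ^ p) ^ (1 / p) ≤ C * D

/-- the `p`-summing norm (`p` finite), relative to norms on domain and codomain. -/
noncomputable def piNormR {V W : Type*} [AddCommGroup V] [Module ℝ V] [AddCommGroup W]
    [Module ℝ W] (p : ℝ) (NV : V → ℝ) (NW : W → ℝ) (T : V →ₗ[ℝ] W) : ℝ :=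
  sInf {C | 0 ≤ C ∧ SummingBoundR p NV NW T C}

def OpBound {V W : Type*} [AddCommGroup V] [Module ℝ V] [AddCommGroup W] [Module ℝ W]
    (NV : V → ℝ) (NW : W → ℝ) (T : V →ₗ[ℝ] W) (C : ℝ) : Prop :=
  ∀ v, NW (T v) ≤ C * NV v

noncomputable def opNormRel {V W : Type*} [AddCommGroup V] [Module ℝ V] [AddCommGroup W]
    [Module ℝ W] (NV : V → ℝ) (NW : W → ℝ) (T : V →ₗ[ℝ] W) : ℝ :=
  sInf {C | 0 ≤ C ∧ OpBound NV NW T C}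

/-- the `p`-summing norm for `p ∈ [1,∞]`; for `p = ∞` it is the operator norm. -/
noncomputable def piNormE {V W : Type*} [AddCommGroup V] [Module ℝ V] [AddCommGroup W]
    [Module ℝ W] (p : ℝ≥0∞) (NV : V → ℝ) (NW : W → ℝ) (T : V →ₗ[ℝ] W) : ℝ :=
  if p = ∞ then opNormRel NV NW T else piNormR p.toReal NV NW T

/-- the canonical inclusion `L_∞(μ) → L_q(μ)` for a finite measure. -/
noncomputable def LpIncl {α : Type} [MeasurableSpace α] (μ : Measure α)
    (hfin : IsFiniteMeasure μ) (q : ℝ≥0∞) : Lp ℝ ∞ μ →ₗ[ℝ] Lp ℝ q μ where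
  toFun f := ⟨(f : α →ₘ[μ] ℝ), Lp.antitone (μ := μ) (E := ℝ) le_top f.2⟩
  map_add' f g := by ext; simp
  map_smul' c f := Subtype.ext rfl

/-- `q`-integral factorization bound: `T = B ∘ ι ∘ A` through `L_∞(μ) → L_q(μ)`. -/
def IntegralBound {V W : Type*} [AddCommGroup V] [Module ℝ V] [AddCommGroup W] [Module ℝ W]
    (q : ℝ≥0∞) (NV : V → ℝ) (NW : W → ℝ) (T : V →ₗ[ℝ] W) (C : ℝ) : Prop :=
  ∃ (α : Type) (_mα : MeasurableSpace α) (μ : Measure α) (hμ : IsFiniteMeasure μ)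
    (A : V →ₗ[ℝ] Lp ℝ ∞ μ) (B : Lp ℝ q μ →ₗ[ℝ] W) (a b : ℝ),
    0 ≤ a ∧ 0 ≤ b ∧ (∀ v, ‖A v‖ ≤ a * NV v) ∧ (∀ g, NW (B g) ≤ b * ‖g‖) ∧
    (∀ v, T v = B (LpIncl μ hμ q (A v))) ∧ a * b ≤ C

/-- the `q`-integral norm (for `q = ∞` this is the `γ_∞` norm). -/
noncomputable def iNormE {V W : Type*} [AddCommGroup V] [Module ℝ V] [AddCommGroup W]
    [Module ℝ W] (q : ℝ≥0∞) (NV : V → ℝ) (NW : W → ℝ) (T : V →ₗ[ℝ] W) : ℝ :=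
  sInf {C | 0 ≤ C ∧ IntegralBound q NV NW T C}

/-- factorization through `L_r(μ)`. -/
def FactorBound {V W : Type*} [AddCommGroup V] [Module ℝ V] [AddCommGroup W] [Module ℝ W]
    (r : ℝ≥0∞) (NV : V → ℝ) (NW : W → ℝ) (T : V →ₗ[ℝ] W) (C : ℝ) : Prop :=
  ∃ (α : Type) (_mα : MeasurableSpace α) (μ : Measure α)
    (A : V →ₗ[ℝ] Lp ℝ r μ) (B : Lp ℝ r μ →ₗ[ℝ] W) (a b : ℝ),
    0 ≤ a ∧ 0 ≤ b ∧ (∀ v, ‖A v‖ ≤ a * NV v) ∧ (∀ g, NW (B g) ≤ b * ‖g‖) ∧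
    (∀ v, T v = B (A v)) ∧ a * b ≤ C

/-- the `γ_r` norm: factorization through `L_r`. -/
noncomputable def gammaNorm {V W : Type*} [AddCommGroup V] [Module ℝ V] [AddCommGroup W]
    [Module ℝ W] (r : ℝ≥0∞) (NV : V → ℝ) (NW : W → ℝ) (T : V →ₗ[ℝ] W) : ℝ :=
  sInf {C | 0 ≤ C ∧ FactorBound r NV NW T C}

/-- `X` (with norm `NX`) has the property `GL(p,q)` with constant `C`:
`i_q(T) ≤ C π_p(T^*)` for all bounded finite rank operators into `X`. -/
def HasGLWith {X : Type*} [AddCommGroup X] [Module ℝ X] (p q : ℝ≥0∞) (NX : X → ℝ)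
    (C : ℝ) : Prop :=
  ∀ (Z : Type) [AddCommGroup Z] [Module ℝ Z] (NZ : Z → ℝ), IsNorm NZ →
    ∀ T : Z →ₗ[ℝ] X, (∃ c, 0 ≤ c ∧ OpBound NZ NX T c) →
      Module.Finite ℝ (LinearMap.range T) →
      iNormE q NZ NX T ≤ C * piNormE p (dualNorm NX) (dualNorm NZ) T.dualMap

/-- `X` has the Gordon–Lewis property with constant `K`: `γ₁(T) ≤ K π₁(T)` for all
bounded finite rank operators from `X`. -/
def HasGLFrom {X : Type*} [AddCommGroup X] [Module ℝ X] (NX : X → ℝ) (K : ℝ) : Prop :=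
  ∀ (Z : Type) [AddCommGroup Z] [Module ℝ Z] (NZ : Z → ℝ), IsNorm NZ →
    ∀ T : X →ₗ[ℝ] Z, (∃ c, 0 ≤ c ∧ OpBound NX NZ T c) →
      Module.Finite ℝ (LinearMap.range T) →
      gammaNorm 1 NX NZ T ≤ K * piNormE 1 NX NZ T

/-- scalar `ℓ_p` expression `(∑ |t i|^p)^{1/p}`. -/
noncomputable def scalLpR (p : ℝ) {n : ℕ} (t : Fin n → ℝ) : ℝ := (∑ i, |t i| ^ p) ^ (1 / p)

noncomputable def scalLpE (p : ℝ≥0∞) {n : ℕ} (t : Fin n → ℝ) : ℝ :=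
  if p = ∞ then sSup (Set.range fun i => |t i|) else scalLpR p.toReal t

/-- `a` lies in the unit ball of `ℓ_{p'}^n`, `p'` the conjugate exponent of `p`. -/
noncomputable def dualCond (p : ℝ≥0∞) {n : ℕ} (a : Fin n → ℝ) : Prop :=
  if p = 1 then ∀ i, |a i| ≤ 1
  else if p = ∞ then ∑ i, |a i| ≤ 1
  else ∑ i, |a i| ^ (p.toReal / (p.toReal - 1)) ≤ 1

/-- the set whose supremum is the Krivine element `(∑ |x i|^p)^{1/p}`. -/
def krivSet {X : Type*} [AddCommGroup X] [Module ℝ X] (p : ℝ≥0∞) {n : ℕ}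
    (x : Fin n → X) : Set X :=
  {y | ∃ a : Fin n → ℝ, dualCond p a ∧ y = ∑ i, a i • x i}

/-- volume ratio of (`ℝ^d`-modelled, `d`-dimensional) `(V,N)` relative to `ℓ_p`. -/
noncomputable def vrRel (p : ℝ≥0∞) [Fact (1 ≤ p)] {V : Type} [MeasureSpace V]
    [AddCommGroup V] [Module ℝ V] (N : V → ℝ) (d : ℕ) : ℝ≥0∞ :=
  sInf {v | ∃ T : (lp (fun _ : ℕ => ℝ) p) →ₗ[ℝ] V, (∀ f, N (T f) ≤ ‖f‖) ∧
    v = (volume {y | N y ≤ 1} / volume (T '' {f | ‖f‖ ≤ 1})) ^ ((d : ℝ)⁻¹)}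

/-- volume ratio of `(V,N)` relative to `d`-dimensional subspaces of `ℓ_r`. -/
noncomputable def vrSub (r : ℝ≥0∞) [Fact (1 ≤ r)] {V : Type} [MeasureSpace V]
    [AddCommGroup V] [Module ℝ V] (N : V → ℝ) (d : ℕ) : ℝ≥0∞ :=
  sInf {v | ∃ (F : Submodule ℝ (lp (fun _ : ℕ => ℝ) r)), Module.finrank ℝ F = d ∧
    ∃ T : F →ₗ[ℝ] V, (∀ f : F, ‖f‖ ≤ 1 → N (T f) ≤ 1) ∧
      v = (volume {y | N y ≤ 1} / volume (T '' {f : F | ‖f‖ ≤ 1})) ^ ((d : ℝ)⁻¹)}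

private lemma rpow_inv_cancel' {a q : ℝ} (ha : 0 ≤ a) (hq : q ≠ 0) : (a ^ (1/q)) ^ q = a := by
  rw [← Real.rpow_mul ha, one_div, inv_mul_cancel₀ hq, Real.rpow_one]

private lemma rpow_cancel_inv' {a q : ℝ} (ha : 0 ≤ a) (hq : q ≠ 0) : (a ^ q) ^ (1/q) = a := by
  rw [← Real.rpow_mul ha, mul_one_div, div_self hq, Real.rpow_one]

private lemma real_add_rpow_le' {a b q : ℝ} (ha : 0 ≤ a) (hb : 0 ≤ b) (hq : 0 ≤ q)
    (hq1 : q ≤ 1) : (a + b) ^ q ≤ a ^ q + b ^ q := by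
  have key := NNReal.rpow_add_le_add_rpow a.toNNReal b.toNNReal hq hq1
  have h2 := NNReal.coe_le_coe.2 key
  push_cast at h2
  rwa [Real.coe_toNNReal _ ha, Real.coe_toNNReal _ hb] at h2

set_option maxHeartbeats 4000000 in
/-- **Theorem 1.3 (first part).** Let `1 ≤ p < ∞`, `E` a Banach space with normalized
1-unconditional basis `(e_j)` and biorthogonal functionals `(e_j^*)` such that `E^*` is
`p`-convex with constant `K^p(E^*)`.  If `T : (∑ₙ X_n)_E → Z` is `p`-summing with
restrictions `T_j = T|_{X_j}` then for every `m`,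
`‖∑_{j<m} π_p(T_j) e_j^*‖ ≤ K^p(E^*) π_p(T)`. -/
theorem pSummingNorm_restrictions_bound
    (p : ℝ) (hp : 1 ≤ p)
    (E : Type*) [NormedAddCommGroup E] [NormedSpace ℝ E] [CompleteSpace E]
    (e : ℕ → E) (e' : ℕ → (E →L[ℝ] ℝ))
    (hnorm1 : ∀ n, ‖e n‖ = 1)
    (hbiorth : ∀ n k, e' n (e k) = if n = k then (1 : ℝ) else 0)
    (hbasis : ∀ x : E, HasSum (fun n => e' n x • e n) x)
    (huncond : ∀ (x y : E) (ε : ℕ → ℝ), (∀ n, |ε n| = 1) →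
      HasSum (fun n => (ε n * e' n x) • e n) y → ‖y‖ = ‖x‖)
    (Kp : ℝ) (hKp : 0 ≤ Kp)
    (hconvexDual : ∀ (k : ℕ) (v : Fin k → (E →L[ℝ] ℝ)) (w : E →L[ℝ] ℝ),
      (∀ j, w (e j) = scalLpR p fun i => v i (e j)) → ‖w‖ ≤ Kp * scalLpR p fun i => ‖v i‖)
    (X : ℕ → Type) [∀ n, NormedAddCommGroup (X n)] [∀ n, NormedSpace ℝ (X n)]
    [∀ n, CompleteSpace (X n)]
    (D : Submodule ℝ (∀ n, X n))
    (hD : ∀ x : ∀ n, X n, x ∈ D ↔ ∃ s : E, HasSum (fun n => ‖x n‖ • e n) s)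
    (ι : ∀ j, X j →ₗ[ℝ] D)
    (hι : ∀ (j : ℕ) (x : X j), ((ι j x : ∀ n, X n) : ∀ n, X n) = Pi.single j x)
    (Z : Type*) [AddCommGroup Z] [Module ℝ Z] (NZ : Z → ℝ) (hNZ : IsNorm NZ)
    (T : D →ₗ[ℝ] Z)
    (hTsumming : ∃ C, 0 ≤ C ∧
      SummingBoundR p (fun x : D => ‖(∑' n, ‖(x : ∀ n, X n) n‖ • e n : E)‖) NZ T C) :
    ∀ m : ℕ,
      ‖∑ j ∈ Finset.range m,
          piNormR p (fun x : X j => ‖x‖) NZ (T.comp (ι j)) • e' j‖ ≤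
        Kp * piNormR p (fun x : D => ‖(∑' n, ‖(x : ∀ n, X n) n‖ • e n : E)‖) NZ T := by
  intro m
  classical
  have hp0 : (0:ℝ) < p := lt_of_lt_of_le zero_lt_one hp
  have hpne : p ≠ 0 := ne_of_gt hp0
  have hip : (0:ℝ) < 1/p := by positivity
  have hipne : (1:ℝ)/p ≠ 0 := ne_of_gt hip
  set ND : D → ℝ := fun x => ‖(∑' n, ‖(x : ∀ n, X n) n‖ • e n : E)‖ with hNDdef
  set π : ℝ := piNormR p ND NZ T with hπdef
  -- norm facts for NZ
  have NZ0 : NZ 0 = 0 := by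
    have h := hNZ.smul_eq 0 0; simpa using h
  have NZsmul : ∀ (a : ℝ) (z : Z), NZ (a • z) = |a| * NZ z := hNZ.smul_eq
  have NZneg : ∀ z, NZ (-z) = NZ z := fun z => by
    have h := hNZ.smul_eq (-1) z; simpa using h
  have NZnn : ∀ z, 0 ≤ NZ z := by
    intro z
    have h := hNZ.add_le z (-z)
    rw [add_neg_cancel, NZ0, NZneg] at h
    linarith
  -- finite sign invariance
  have uncondSign : ∀ (F : Finset ℕ) (a σ : ℕ → ℝ), (∀ n, |σ n| = 1) →
      ‖∑ n ∈ F, (σ n * a n) • e n‖ = ‖∑ n ∈ F, a n • e n‖ := by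
    intro F a σ hσ
    have hcoord : ∀ k, e' k (∑ n ∈ F, a n • e n) = if k ∈ F then a k else 0 := by
      intro k
      rw [map_sum]
      have h1 : ∀ n ∈ F, e' k (a n • e n) = if k = n then a n else 0 := by
        intro n _
        rw [_root_.map_smul, hbiorth k n, smul_eq_mul, mul_ite, mul_one, mul_zero]
      rw [Finset.sum_congr rfl h1, Finset.sum_ite_eq]
    refine huncond _ _ σ hσ ?_
    have h0 : ∀ n ∉ F, (σ n * e' n (∑ n ∈ F, a n • e n)) • e n = 0 := by
      intro n hn; rw [hcoord n, if_neg hn, mul_zero, zero_smul]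
    have hsum : ∑ n ∈ F, (σ n * e' n (∑ n ∈ F, a n • e n)) • e n
        = ∑ n ∈ F, (σ n * a n) • e n :=
      Finset.sum_congr rfl fun n hn => by rw [hcoord n, if_pos hn]
    rw [← hsum]
    exact hasSum_sum_of_ne_finset_zero h0
  -- finite scaling monotonicity
  have uncondScale : ∀ (F : Finset ℕ) (a r : ℕ → ℝ), (∀ n, |r n| ≤ 1) →
      ‖∑ n ∈ F, (r n * a n) • e n‖ ≤ ‖∑ n ∈ F, a n • e n‖ := by
    intro F a r hr
    have main : ∀ (G : Finset ℕ) (a : ℕ → ℝ),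
        ‖∑ n ∈ F, ((if n ∈ G then r n else 1) * a n) • e n‖ ≤ ‖∑ n ∈ F, a n • e n‖ := by
      intro G
      induction G using Finset.induction_on with
      | empty => intro a; simp
      | insert k G hk ih =>
        intro a
        by_cases hkF : k ∈ F
        · have hsplit : ∀ (cf : ℕ → ℝ), ∑ n ∈ F, cf n • e n
              = cf k • e k + ∑ n ∈ F.erase k, cf n • e n := fun cf =>
            (Finset.add_sum_erase F (fun n => cf n • e n) hkF).symm
          set b : ℕ → ℝ := fun n => (if n ∈ G then r n else 1) * a n with hb
          set v : E := ∑ n ∈ F.erase k, b n • e n with hv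
          have hL : ∑ n ∈ F, ((if n ∈ insert k G then r n else 1) * a n) • e n
              = (r k * a k) • e k + v := by
            rw [hsplit]
            congr 1
            · rw [if_pos (Finset.mem_insert_self k G)]
            · refine Finset.sum_congr rfl fun n hn => ?_
              have hnk : n ≠ k := Finset.ne_of_mem_erase hn
              rw [hb]
              simp only [Finset.mem_insert, hnk, false_or]
          have hB1eq : a k • e k + v = ∑ n ∈ F, b n • e n := by
            rw [hsplit]
            congr 1
            rw [hb]
            simp only [hk, if_neg, one_mul]
            simp [hk]
          have hB1 : ‖a k • e k + v‖ ≤ ‖∑ n ∈ F, a n • e n‖ := by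
            rw [hB1eq]; exact ih a
          have hB2 : ‖(-(a k)) • e k + v‖ = ‖a k • e k + v‖ := by
            set σ : ℕ → ℝ := fun n => if n = k then (-1 : ℝ) else 1 with hσ
            set b' : ℕ → ℝ := fun n => if n = k then a k else b n with hb'
            have hσ1 : ∀ n, |σ n| = 1 := by
              intro n; rw [hσ]; dsimp only; split <;> simp
            have h1 : ∑ n ∈ F, (σ n * b' n) • e n = (-(a k)) • e k + v := by
              rw [hsplit]
              congr 1
              · rw [hσ, hb']; simp
              · refine Finset.sum_congr rfl fun n hn => ?_
                have hnk : n ≠ k := Finset.ne_of_mem_erase hn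
                rw [hσ, hb']; simp only [hnk, if_neg, ite_false, one_mul]
            have h2 : ∑ n ∈ F, b' n • e n = a k • e k + v := by
              rw [hsplit]
              congr 1
              · rw [hb']; simp
              · refine Finset.sum_congr rfl fun n hn => ?_
                have hnk : n ≠ k := Finset.ne_of_mem_erase hn
                rw [hb']; simp only [hnk, ite_false]
            rw [← h1, ← h2]
            exact uncondSign F b' σ hσ1
          have hrk := hr k
          have hrk1 : -1 ≤ r k := neg_le_of_abs_le hrk
          have hrk2 : r k ≤ 1 := le_of_abs_le hrk
          have hpos1 : (0:ℝ) ≤ (1 + r k)/2 := by linarith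
          have hpos2 : (0:ℝ) ≤ (1 - r k)/2 := by linarith
          have hdec : (r k * a k) • e k + v
              = ((1 + r k)/2) • (a k • e k + v) + ((1 - r k)/2) • ((-(a k)) • e k + v) := by
            simp only [smul_add, smul_smul]
            module
          rw [hL, hdec]
          calc ‖((1 + r k)/2) • (a k • e k + v) + ((1 - r k)/2) • ((-(a k)) • e k + v)‖
              ≤ ((1 + r k)/2) * ‖a k • e k + v‖ + ((1 - r k)/2) * ‖(-(a k)) • e k + v‖ := by
                refine (norm_add_le _ _).trans ?_
                rw [norm_smul, norm_smul, Real.norm_eq_abs, Real.norm_eq_abs,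
                  abs_of_nonneg hpos1, abs_of_nonneg hpos2]
            _ = ((1 + r k)/2) * ‖a k • e k + v‖ + ((1 - r k)/2) * ‖a k • e k + v‖ := by
                rw [hB2]
            _ = ‖a k • e k + v‖ := by ring
            _ ≤ ‖∑ n ∈ F, a n • e n‖ := hB1
        · have hcong : ∀ n ∈ F, ((if n ∈ insert k G then r n else 1) * a n) • e n
              = ((if n ∈ G then r n else 1) * a n) • e n := by
            intro n hn
            have hnk : n ≠ k := fun h => hkF (h ▸ hn)
            simp only [Finset.mem_insert, hnk, false_or]
          rw [Finset.sum_congr rfl hcong]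
          exact ih a
    have hfin : ∑ n ∈ F, (r n * a n) • e n
        = ∑ n ∈ F, ((if n ∈ F then r n else 1) * a n) • e n :=
      Finset.sum_congr rfl fun n hn => by rw [if_pos hn]
    rw [hfin]
    exact main F a
  -- truncation bound
  have coordBound : ∀ (x : E) (s : ℕ → ℝ) (F : Finset ℕ), (∀ n, |s n| ≤ |e' n x|) →
      ‖∑ n ∈ F, s n • e n‖ ≤ ‖x‖ := by
    intro x s F hs
    refine le_of_forall_pos_le_add fun ε hε => ?_
    have htend : Filter.Tendsto (fun G : Finset ℕ => ∑ n ∈ G, e' n x • e n)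
        Filter.atTop (nhds x) := hbasis x
    rw [Metric.tendsto_atTop] at htend
    obtain ⟨F₀, hF₀⟩ := htend ε hε
    set G := F ∪ F₀ with hG
    have hGnorm : ‖∑ n ∈ G, e' n x • e n‖ ≤ ‖x‖ + ε := by
      have hd := hF₀ G Finset.subset_union_right
      rw [dist_eq_norm] at hd
      have h3 := norm_add_le (∑ n ∈ G, e' n x • e n - x) x
      rw [sub_add_cancel] at h3
      linarith
    have hFG : F ⊆ G := Finset.subset_union_left
    set r : ℕ → ℝ := fun n => if n ∈ F then (if e' n x = 0 then 0 else s n / e' n x) else 0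
      with hrdef
    have hr : ∀ n, |r n| ≤ 1 := by
      intro n
      rw [hrdef]; dsimp only
      by_cases h1 : n ∈ F
      · rw [if_pos h1]
        by_cases h2 : e' n x = 0
        · rw [if_pos h2]; simp
        · rw [if_neg h2, abs_div]
          rw [div_le_one (abs_pos.2 h2)]
          exact hs n
      · rw [if_neg h1]; simp
    have hra : ∀ n ∈ G, (if n ∈ F then s n else 0) • e n = (r n * e' n x) • e n := by
      intro n _
      congr 1
      rw [hrdef]; dsimp only
      by_cases h1 : n ∈ F
      · rw [if_pos h1, if_pos h1]
        by_cases h2 : e' n x = 0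
        · rw [if_pos h2, zero_mul]
          have := hs n
          rw [h2, abs_zero] at this
          exact abs_nonpos_iff.1 this
        · rw [if_neg h2, div_mul_cancel₀ _ h2]
      · rw [if_neg h1, if_neg h1, zero_mul]
    have hext : ∑ n ∈ F, s n • e n = ∑ n ∈ G, (if n ∈ F then s n else 0) • e n := by
      have h1 : ∑ n ∈ F, s n • e n = ∑ n ∈ F, (if n ∈ F then s n else 0) • e n :=
        Finset.sum_congr rfl fun n hn => by rw [if_pos hn]
      rw [h1]
      exact Finset.sum_subset hFG fun n _ hn => by rw [if_neg hn, zero_smul]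
    calc ‖∑ n ∈ F, s n • e n‖ = ‖∑ n ∈ G, (r n * e' n x) • e n‖ := by
          rw [hext, Finset.sum_congr rfl hra]
      _ ≤ ‖∑ n ∈ G, e' n x • e n‖ := uncondScale G (fun n => e' n x) r hr
      _ ≤ ‖x‖ + ε := hGnorm
  -- coordinates of finite sums of injections
  have coordSum : ∀ (F : Finset ℕ) (v : ∀ k, X k) (n : ℕ),
      ((∑ j ∈ F, ι j (v j) : D) : ∀ k, X k) n = if n ∈ F then v n else 0 := by
    intro F v n
    have hcoe : ((∑ j ∈ F, ι j (v j) : D) : ∀ k, X k)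
        = ∑ j ∈ F, ((ι j (v j) : D) : ∀ k, X k) := by
      exact_mod_cast AddSubmonoidClass.coe_finset_sum (fun j => ι j (v j)) F
    rw [hcoe, Finset.sum_apply]
    by_cases hn : n ∈ F
    · rw [Finset.sum_eq_single_of_mem n hn]
      · rw [hι, if_pos hn, Pi.single_eq_same]
      · intro j _ hjn
        rw [hι]
        exact Pi.single_eq_of_ne (Ne.symm hjn) _
    · rw [if_neg hn]
      refine Finset.sum_eq_zero fun j hj => ?_
      rw [hι]
      exact Pi.single_eq_of_ne (fun h => hn (by rw [h]; exact hj)) _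
  have ND_sum : ∀ (F : Finset ℕ) (v : ∀ k, X k),
      ND (∑ j ∈ F, ι j (v j)) = ‖∑ n ∈ F, ‖v n‖ • e n‖ := by
    intro F v
    have h2 : (∑' n, ‖((∑ j ∈ F, ι j (v j) : D) : ∀ k, X k) n‖ • e n : E)
        = ∑ n ∈ F, ‖v n‖ • e n := by
      have h1 : ∀ n, ‖((∑ j ∈ F, ι j (v j) : D) : ∀ k, X k) n‖ • e n
          = if n ∈ F then ‖v n‖ • e n else 0 := by
        intro n
        rw [coordSum]
        by_cases hn : n ∈ F
        · rw [if_pos hn, if_pos hn]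
        · rw [if_neg hn, if_neg hn, norm_zero, zero_smul]
      rw [tsum_congr h1, tsum_eq_sum (s := F) (fun n hn => if_neg hn)]
      exact Finset.sum_congr rfl fun n hn => if_pos hn
    simp only [hNDdef]
    rw [h2]
  have ND_single : ∀ (j : ℕ) (v : X j), ND (ι j v) = ‖v‖ := by
    intro j v
    have h0 : ι j v = ∑ k ∈ ({j} : Finset ℕ), ι k (Pi.single j v k) := by
      rw [Finset.sum_singleton, Pi.single_eq_same]
    rw [h0, ND_sum, Finset.sum_singleton, Pi.single_eq_same, norm_smul, Real.norm_eq_abs,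
      abs_norm, hnorm1, mul_one]
  -- piNormR basics
  have pi_nonneg : 0 ≤ π := le_csInf hTsumming fun C hC => hC.1
  have pi_bound : SummingBoundR p ND NZ T π := by
    intro n x Dq hDq hweak
    rcases eq_or_lt_of_le hDq with h0 | h0
    · obtain ⟨C, hC0, hC⟩ := hTsumming
      have h1 := hC n x Dq hDq hweak
      rw [← h0, mul_zero] at h1 ⊢
      exact h1
    · rw [← div_le_iff₀ h0]
      refine le_csInf hTsumming fun C hC => ?_
      rw [div_le_iff₀ h0]
      exact hC.2 n x Dq hDq hweak
  set c : ℕ → ℝ := fun j => piNormR p (fun x : X j => ‖x‖) NZ (T.comp (ι j)) with hcdef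
  have hcomp : ∀ (j : ℕ) (C : ℝ), SummingBoundR p ND NZ T C →
      SummingBoundR p (fun x : X j => ‖x‖) NZ (T.comp (ι j)) C := by
    intro j C hC n x Dq hDq hweak
    have h1 := hC n (fun i => ι j (x i)) Dq hDq ?_
    · exact h1
    · intro f hf
      have hadm : ∀ u : X j, |(f.comp (ι j)) u| ≤ ‖u‖ := by
        intro u
        have h2 := hf (ι j u)
        rwa [ND_single] at h2
      exact hweak (f.comp (ι j)) hadm
  have cSne : ∀ j : ℕ,
      {C | 0 ≤ C ∧ SummingBoundR p (fun x : X j => ‖x‖) NZ (T.comp (ι j)) C}.Nonempty := by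
    intro j
    obtain ⟨C, hC0, hC⟩ := hTsumming
    exact ⟨C, hC0, hcomp j C hC⟩
  have c_nonneg : ∀ j, 0 ≤ c j := fun j => le_csInf (cSne j) fun C hC => hC.1
  have c_extract : ∀ (j : ℕ) (C : ℝ), 0 ≤ C → C < c j →
      ∃ (n : ℕ) (x : Fin n → X j),
        (∀ f : Module.Dual ℝ (X j), (∀ u, |f u| ≤ ‖u‖) → ∑ i, |f (x i)| ^ p ≤ 1) ∧
        C ^ p < ∑ i, NZ (T (ι j (x i))) ^ p := by
    intro j C hC0 hCc
    have hnb : ¬ SummingBoundR p (fun x : X j => ‖x‖) NZ (T.comp (ι j)) C := by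
      intro hmem
      have h1 : c j ≤ C := csInf_le ⟨0, fun C' hC' => hC'.1⟩ ⟨hC0, hmem⟩
      exact absurd hCc (not_lt.2 h1)
    unfold SummingBoundR at hnb
    push_neg at hnb
    obtain ⟨n, x, Dw, hDw0, hweak, hstrong⟩ := hnb
    have habs0 : ∀ (g : Fin n → ℝ), 0 ≤ ∑ i, |g i| ^ p :=
      fun g => Finset.sum_nonneg fun i _ => Real.rpow_nonneg (abs_nonneg _) _
    have hDwpos : 0 < Dw := by
      rcases lt_or_eq_of_le hDw0 with h | h
      · exact h
      exfalso
      have hx0 : ∀ i, x i = 0 := by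
        intro i
        by_contra hxi
        obtain ⟨g, hg1, hgx⟩ := exists_dual_vector ℝ (x i) (norm_ne_zero_iff.2 hxi)
        have hadm : ∀ u : X j, |(g : X j →ₗ[ℝ] ℝ) u| ≤ ‖u‖ := by
          intro u
          have h2 := g.le_opNorm u
          rw [hg1, one_mul] at h2
          simpa [Real.norm_eq_abs] using h2
        have hw := hweak (g : X j →ₗ[ℝ] ℝ) hadm
        rw [← h] at hw
        have hsum0 : ∑ i', |(g : X j →ₗ[ℝ] ℝ) (x i')| ^ p = 0 := by
          by_contra hne
          have hpos : 0 < ∑ i', |(g : X j →ₗ[ℝ] ℝ) (x i')| ^ p :=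
            lt_of_le_of_ne (habs0 _) (Ne.symm hne)
          have := Real.rpow_pos_of_pos hpos (1/p)
          linarith
        have hterm : |(g : X j →ₗ[ℝ] ℝ) (x i)| ^ p = 0 := by
          have h3 := Finset.sum_eq_zero_iff_of_nonneg
            (fun i' (_ : i' ∈ Finset.univ) => Real.rpow_nonneg (abs_nonneg _) p) |>.1 hsum0
          exact h3 i (Finset.mem_univ i)
        have hterm2 : (g : X j →ₗ[ℝ] ℝ) (x i) = 0 := by
          by_contra hne
          have := Real.rpow_pos_of_pos (abs_pos.2 hne) p
          linarith [hterm]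
        have h4 : g (x i) = 0 := hterm2
        rw [h4] at hgx
        exact hxi (norm_eq_zero.1 (by exact_mod_cast hgx.symm))
      have hz : ∀ i : Fin n, NZ ((T.comp (ι j)) (x i)) ^ p = 0 := by
        intro i
        rw [hx0 i, map_zero, NZ0, Real.zero_rpow hpne]
      rw [Finset.sum_congr rfl fun i _ => hz i, Finset.sum_const_zero,
        Real.zero_rpow hipne, ← h, mul_zero] at hstrong
      exact lt_irrefl 0 hstrong
    have hweakp : ∀ f : Module.Dual ℝ (X j), (∀ u, |f u| ≤ ‖u‖) →
        ∑ i, |f (x i)| ^ p ≤ Dw ^ p := by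
      intro f hf
      have h1 := hweak f hf
      have h2 := Real.rpow_le_rpow (Real.rpow_nonneg (habs0 _) _) h1 hp0.le
      rwa [rpow_inv_cancel' (habs0 _) hpne] at h2
    have hstrong' : C * Dw < (∑ i, NZ (T (ι j (x i))) ^ p) ^ (1/p) := by
      simpa [LinearMap.comp_apply] using hstrong
    have hsnn : 0 ≤ ∑ i, NZ (T (ι j (x i))) ^ p :=
      Finset.sum_nonneg fun i _ => Real.rpow_nonneg (NZnn _) _
    refine ⟨n, fun i => Dw⁻¹ • x i, ?_, ?_⟩
    · intro f hf
      have heq : ∑ i, |f (Dw⁻¹ • x i)| ^ p = Dw⁻¹ ^ p * ∑ i, |f (x i)| ^ p := by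
        rw [Finset.mul_sum]
        refine Finset.sum_congr rfl fun i _ => ?_
        rw [_root_.map_smul, smul_eq_mul, abs_mul,
          Real.mul_rpow (abs_nonneg _) (abs_nonneg _), abs_of_nonneg (inv_nonneg.2 hDw0)]
      rw [heq]
      calc Dw⁻¹ ^ p * ∑ i, |f (x i)| ^ p ≤ Dw⁻¹ ^ p * Dw ^ p :=
            mul_le_mul_of_nonneg_left (hweakp f hf) (Real.rpow_nonneg (inv_nonneg.2 hDw0) _)
        _ = 1 := by
            rw [← Real.mul_rpow (inv_nonneg.2 hDw0) hDw0, inv_mul_cancel₀ hDwpos.ne',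
              Real.one_rpow]
    · have hCD : (C * Dw) ^ p < ∑ i, NZ (T (ι j (x i))) ^ p := by
        have h2 := Real.rpow_lt_rpow (mul_nonneg hC0 hDw0) hstrong' hp0
        rwa [rpow_inv_cancel' hsnn hpne] at h2
      have heq : ∑ i, NZ (T (ι j (Dw⁻¹ • x i))) ^ p
          = Dw⁻¹ ^ p * ∑ i, NZ (T (ι j (x i))) ^ p := by
        rw [Finset.mul_sum]
        refine Finset.sum_congr rfl fun i _ => ?_
        rw [_root_.map_smul, _root_.map_smul, NZsmul, abs_of_nonneg (inv_nonneg.2 hDw0),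
          Real.mul_rpow (inv_nonneg.2 hDw0) (NZnn _)]
      rw [heq]
      have hCeq : C ^ p = Dw⁻¹ ^ p * (C * Dw) ^ p := by
        rw [Real.mul_rpow hC0 hDw0, ← mul_assoc, mul_comm (Dw⁻¹ ^ p), mul_assoc,
          ← Real.mul_rpow (inv_nonneg.2 hDw0) hDw0, inv_mul_cancel₀ hDwpos.ne',
          Real.one_rpow, mul_one]
      rw [hCeq]
      exact mul_lt_mul_of_pos_left hCD (Real.rpow_pos_of_pos (inv_pos.2 hDwpos) _)
  -- coordinate functional computations
  have gOf_coord : ∀ (β : Fin m → ℝ) (k : ℕ),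
      (∑ j : Fin m, β j • e' (j : ℕ)) (e k) = if h : k < m then β ⟨k, h⟩ else 0 := by
    intro β k
    rw [ContinuousLinearMap.sum_apply]
    have hterm : ∀ j : Fin m, (β j • e' (j : ℕ)) (e k) = if (j : ℕ) = k then β j else 0 := by
      intro j
      rw [ContinuousLinearMap.smul_apply, hbiorth (j : ℕ) k, smul_eq_mul, mul_ite, mul_one,
        mul_zero]
    rw [Finset.sum_congr rfl fun j _ => hterm j]
    by_cases hk : k < m
    · rw [dif_pos hk, Finset.sum_eq_single_of_mem ⟨k, hk⟩ (Finset.mem_univ _)]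
      · rw [if_pos rfl]
      · intro j _ hj
        rw [if_neg fun h => hj (Fin.ext h)]
    · rw [dif_neg hk]
      exact Finset.sum_eq_zero fun j _ => by
        rw [if_neg fun h => hk (by rw [← h]; exact j.isLt)]
  have coordOfSum : ∀ (t : Fin m → ℝ) (k : ℕ),
      e' k (∑ j : Fin m, t j • e (j : ℕ)) = if h : k < m then t ⟨k, h⟩ else 0 := by
    intro t k
    rw [map_sum]
    have hterm : ∀ j : Fin m, e' k (t j • e (j : ℕ)) = if k = (j : ℕ) then t j else 0 := by
      intro j
      rw [_root_.map_smul, hbiorth k (j : ℕ), smul_eq_mul, mul_ite, mul_one, mul_zero]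
    rw [Finset.sum_congr rfl fun j _ => hterm j]
    by_cases hk : k < m
    · rw [dif_pos hk, Finset.sum_eq_single_of_mem ⟨k, hk⟩ (Finset.mem_univ _)]
      · rw [if_pos rfl]
      · intro j _ hj
        rw [if_neg fun h => hj (Fin.ext h.symm)]
    · rw [dif_neg hk]
      exact Finset.sum_eq_zero fun j _ => by
        rw [if_neg fun h => hk (by rw [h]; exact j.isLt)]
  -- the dual coefficient body
  set Bset : Set (Fin m → ℝ) :=
    {β | (∀ j, 0 ≤ β j) ∧ ‖∑ j : Fin m, β j • e' (j : ℕ)‖ ≤ 1} with hBsetdef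
  have hBset0 : (0 : Fin m → ℝ) ∈ Bset := by
    constructor
    · intro j; exact le_refl 0
    · simp
  have hBle1 : ∀ β ∈ Bset, ∀ j : Fin m, β j ≤ 1 := by
    intro β hβ j
    have h1 : (∑ j' : Fin m, β j' • e' (j' : ℕ)) (e (j : ℕ)) = β j := by
      rw [gOf_coord, dif_pos j.isLt]
    calc β j = (∑ j' : Fin m, β j' • e' (j' : ℕ)) (e (j : ℕ)) := h1.symm
      _ ≤ |(∑ j' : Fin m, β j' • e' (j' : ℕ)) (e (j : ℕ))| := le_abs_self _
      _ = ‖(∑ j' : Fin m, β j' • e' (j' : ℕ)) (e (j : ℕ))‖ := (Real.norm_eq_abs _).symm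
      _ ≤ ‖∑ j' : Fin m, β j' • e' (j' : ℕ)‖ * ‖e (j : ℕ)‖ :=
          ContinuousLinearMap.le_opNorm _ _
      _ ≤ 1 := by rw [hnorm1, mul_one]; exact hβ.2
  -- K1 : dual coefficients of a functional on D
  have K1 : ∀ f : Module.Dual ℝ D, (∀ u : D, |f u| ≤ ND u) →
      ∃ β : Fin m → ℝ, (∀ j, 0 ≤ β j) ∧
        (∀ x : E, ∑ j : Fin m, β j * |e' (j : ℕ) x| ≤ ‖x‖) ∧
        (∀ (j : Fin m) (v : X (j : ℕ)), |f (ι (j : ℕ) v)| ≤ β j * ‖v‖) := by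
    intro f hf
    set A : Fin m → Set ℝ := fun j => (fun v : X (j : ℕ) => f (ι (j : ℕ) v)) '' {v | ‖v‖ ≤ 1}
      with hA
    have hzmem : ∀ j : Fin m, (0 : ℝ) ∈ A j := by
      intro j
      refine ⟨0, by simp, ?_⟩
      show f (ι (j : ℕ) 0) = 0
      rw [map_zero, map_zero]
    have hAne : ∀ j, (A j).Nonempty := fun j => ⟨0, hzmem j⟩
    have hAbdd : ∀ j, BddAbove (A j) := by
      intro j
      refine ⟨1, ?_⟩
      rintro r ⟨v, hv, rfl⟩
      calc f (ι (j : ℕ) v) ≤ |f (ι (j : ℕ) v)| := le_abs_self _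
        _ ≤ ND (ι (j : ℕ) v) := hf _
        _ = ‖v‖ := ND_single _ v
        _ ≤ 1 := hv
    set β : Fin m → ℝ := fun j => sSup (A j) with hβ
    have hβ0 : ∀ j, 0 ≤ β j := fun j => le_csSup (hAbdd j) (hzmem j)
    have hβv : ∀ (j : Fin m) (v : X (j : ℕ)), |f (ι (j : ℕ) v)| ≤ β j * ‖v‖ := by
      intro j v
      rcases eq_or_ne v 0 with rfl | hv
      · rw [map_zero, map_zero, abs_zero, norm_zero, mul_zero]
      · have hnv : 0 < ‖v‖ := norm_pos_iff.2 hv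
        have hmem1 : f (ι (j : ℕ) (‖v‖⁻¹ • v)) ∈ A j := by
          refine ⟨‖v‖⁻¹ • v, ?_, rfl⟩
          simp only [Set.mem_setOf_eq, norm_smul, Real.norm_eq_abs,
            abs_of_nonneg (inv_nonneg.2 hnv.le)]
          rw [inv_mul_cancel₀ hnv.ne']
        have hmem2 : f (ι (j : ℕ) (-(‖v‖⁻¹ • v))) ∈ A j := by
          refine ⟨-(‖v‖⁻¹ • v), ?_, rfl⟩
          simp only [Set.mem_setOf_eq, norm_neg, norm_smul, Real.norm_eq_abs,
            abs_of_nonneg (inv_nonneg.2 hnv.le)]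
          rw [inv_mul_cancel₀ hnv.ne']
        have h1 : f (ι (j : ℕ) (‖v‖⁻¹ • v)) ≤ β j := le_csSup (hAbdd j) hmem1
        have h2 : f (ι (j : ℕ) (-(‖v‖⁻¹ • v))) ≤ β j := le_csSup (hAbdd j) hmem2
        have he : f (ι (j : ℕ) (‖v‖⁻¹ • v)) = ‖v‖⁻¹ * f (ι (j : ℕ) v) := by
          rw [_root_.map_smul, _root_.map_smul, smul_eq_mul]
        have he2 : f (ι (j : ℕ) (-(‖v‖⁻¹ • v))) = -(‖v‖⁻¹ * f (ι (j : ℕ) v)) := by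
          rw [map_neg, map_neg, he]
        rw [he] at h1
        rw [he2] at h2
        have habs : ‖v‖⁻¹ * |f (ι (j : ℕ) v)| ≤ β j := by
          rw [← abs_of_nonneg (inv_nonneg.2 hnv.le), ← abs_mul]
          exact abs_le.2 ⟨by linarith, h1⟩
        calc |f (ι (j : ℕ) v)| = ‖v‖ * (‖v‖⁻¹ * |f (ι (j : ℕ) v)|) := by
              field_simp
          _ ≤ ‖v‖ * β j := mul_le_mul_of_nonneg_left habs (norm_nonneg v)
          _ = β j * ‖v‖ := mul_comm _ _
    refine ⟨β, hβ0, ?_, hβv⟩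
    intro x
    refine le_of_forall_pos_le_add fun ε hε => ?_
    set s : Fin m → ℝ := fun j => |e' (j : ℕ) x| with hs
    have hs0 : ∀ j, 0 ≤ s j := fun j => abs_nonneg _
    have hssum : 0 ≤ ∑ j : Fin m, s j := Finset.sum_nonneg fun j _ => hs0 j
    set ε' : ℝ := ε / ((∑ j : Fin m, s j) + 1) with hε'
    have hε'pos : 0 < ε' := by positivity
    have hzex : ∀ j : Fin m, ∃ v : X (j : ℕ), ‖v‖ ≤ 1 ∧ β j - ε' < f (ι (j : ℕ) v) := by
      intro j
      obtain ⟨r, hrA, hr⟩ := exists_lt_of_lt_csSup (hAne j)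
        (show β j - ε' < β j by linarith)
      obtain ⟨v, hv, rfl⟩ := hrA
      exact ⟨v, hv, hr⟩
    choose z hz1 hz2 using hzex
    set w : ∀ k, X k := fun k => if h : k < m then s ⟨k, h⟩ • z ⟨k, h⟩ else 0 with hw
    set d : D := ∑ k ∈ Finset.range m, ι k (w k) with hd
    have hfd : f d = ∑ j : Fin m, s j * f (ι (j : ℕ) (z j)) := by
      rw [hd, map_sum, ← Fin.sum_univ_eq_sum_range (fun k => f (ι k (w k))) m]
      refine Finset.sum_congr rfl fun j _ => ?_
      have hwj : w (j : ℕ) = s j • z j := by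
        rw [hw]; dsimp only; rw [dif_pos j.isLt]
      rw [hwj, _root_.map_smul, _root_.map_smul, smul_eq_mul]
    have hNDd : ND d ≤ ‖x‖ := by
      rw [hd, ND_sum]
      refine coordBound x (fun n => ‖w n‖) (Finset.range m) fun n => ?_
      rw [hw]; dsimp only
      by_cases hn : n < m
      · rw [dif_pos hn, abs_norm, norm_smul, Real.norm_eq_abs]
        have hz1' := hz1 ⟨n, hn⟩
        calc |s ⟨n, hn⟩| * ‖z ⟨n, hn⟩‖ ≤ |s ⟨n, hn⟩| * 1 :=
              mul_le_mul_of_nonneg_left hz1' (abs_nonneg _)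
          _ = s ⟨n, hn⟩ := by rw [mul_one, abs_of_nonneg (hs0 _)]
          _ = |e' n x| := rfl
      · rw [dif_neg hn, norm_zero, abs_zero]
        exact abs_nonneg _
    have hlow : ∑ j : Fin m, s j * (β j - ε') ≤ f d := by
      rw [hfd]
      exact Finset.sum_le_sum fun j _ =>
        mul_le_mul_of_nonneg_left (hz2 j).le (hs0 j)
    have hfd2 : f d ≤ ND d := (le_abs_self _).trans (hf d)
    have hexp : ∑ j : Fin m, s j * (β j - ε')
        = ∑ j : Fin m, β j * s j - ε' * ∑ j : Fin m, s j := by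
      rw [Finset.mul_sum, ← Finset.sum_sub_distrib]
      exact Finset.sum_congr rfl fun j _ => by ring
    have hε'sum : ε' * ∑ j : Fin m, s j ≤ ε := by
      rw [hε']
      calc ε / ((∑ j : Fin m, s j) + 1) * ∑ j : Fin m, s j
          = ε * ((∑ j : Fin m, s j) / ((∑ j : Fin m, s j) + 1)) := by ring
        _ ≤ ε * 1 := by
            refine mul_le_mul_of_nonneg_left ?_ hε.le
            rw [div_le_one (by linarith)]
            linarith
        _ = ε := mul_one ε
    have := hexp ▸ hlow
    linarith [hfd2, hNDd]
  -- K1' : package into Bset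
  have K1' : ∀ f : Module.Dual ℝ D, (∀ u : D, |f u| ≤ ND u) →
      ∃ β ∈ Bset, ∀ (j : Fin m) (v : X (j : ℕ)), |f (ι (j : ℕ) v)| ≤ β j * ‖v‖ := by
    intro f hf
    obtain ⟨β, h0, hpair, hv⟩ := K1 f hf
    refine ⟨β, ⟨h0, ?_⟩, hv⟩
    refine ContinuousLinearMap.opNorm_le_bound _ zero_le_one fun x => ?_
    rw [Real.norm_eq_abs, one_mul]
    have h1 : (∑ j : Fin m, β j • e' (j : ℕ)) x = ∑ j : Fin m, β j * e' (j : ℕ) x := by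
      rw [ContinuousLinearMap.sum_apply]
      exact Finset.sum_congr rfl fun j _ => by
        rw [ContinuousLinearMap.smul_apply, smul_eq_mul]
    rw [h1]
    calc |∑ j : Fin m, β j * e' (j : ℕ) x| ≤ ∑ j : Fin m, |β j * e' (j : ℕ) x| :=
          Finset.abs_sum_le_sum_abs _ _
      _ = ∑ j : Fin m, β j * |e' (j : ℕ) x| :=
          Finset.sum_congr rfl fun j _ => by rw [abs_mul, abs_of_nonneg (h0 j)]
      _ ≤ ‖x‖ := hpair x
  -- K2 : p-convexity combination
  have K2 : ∀ {ιT : Type} (s : Finset ιT) (θ : ιT → ℝ) (b : ιT → Fin m → ℝ),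
      (∀ i ∈ s, 0 ≤ θ i) → (∑ i ∈ s, θ i = 1) → (∀ i ∈ s, b i ∈ Bset) →
      ‖∑ j : Fin m, (∑ i ∈ s, θ i * b i j ^ p) ^ (1/p) • e' (j : ℕ)‖ ≤ Kp := by
    intro ιT s θ b hθ0 hθ1 hbB
    set n := s.card with hn
    set es : Fin n ≃ {x // x ∈ s} := s.equivFin.symm with hes
    set v : Fin n → (E →L[ℝ] ℝ) :=
      fun i => (θ (es i : ιT)) ^ (1/p) • (∑ j : Fin m, b (es i : ιT) j • e' (j : ℕ)) with hv
    have hconv : ∀ (g : ιT → ℝ), ∑ i ∈ s, g i = ∑ i : Fin n, g (es i : ιT) := by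
      intro g
      rw [← Finset.sum_coe_sort s g]
      exact (Equiv.sum_comp es fun a => g (a : ιT)).symm
    have hcoordw : ∀ k : ℕ,
        (∑ j : Fin m, (∑ i ∈ s, θ i * b i j ^ p) ^ (1/p) • e' (j : ℕ)) (e k)
          = scalLpR p fun i => v i (e k) := by
      intro k
      rw [gOf_coord]
      simp only [scalLpR, hv, ContinuousLinearMap.smul_apply, smul_eq_mul]
      by_cases hk : k < m
      · rw [dif_pos hk]
        have hterm : ∀ i : Fin n,
            |θ (es i : ιT) ^ (1/p) * (∑ j : Fin m, b (es i : ιT) j • e' (j : ℕ)) (e k)| ^ p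
              = θ (es i : ιT) * b (es i : ιT) ⟨k, hk⟩ ^ p := by
          intro i
          rw [gOf_coord, dif_pos hk]
          have hθi : 0 ≤ θ (es i : ιT) := hθ0 _ (es i).2
          have hbi : 0 ≤ b (es i : ιT) ⟨k, hk⟩ := (hbB _ (es i).2).1 _
          rw [abs_of_nonneg (mul_nonneg (Real.rpow_nonneg hθi _) hbi),
            Real.mul_rpow (Real.rpow_nonneg hθi _) hbi, rpow_inv_cancel' hθi hpne]
        rw [Finset.sum_congr rfl fun i _ => hterm i]
        rw [hconv fun i => θ i * b i ⟨k, hk⟩ ^ p]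
      · rw [dif_neg hk]
        have hterm : ∀ i : Fin n,
            |θ (es i : ιT) ^ (1/p) * (∑ j : Fin m, b (es i : ιT) j • e' (j : ℕ)) (e k)| ^ p
              = 0 := by
          intro i
          rw [gOf_coord, dif_neg hk, mul_zero, abs_zero, Real.zero_rpow hpne]
        rw [Finset.sum_congr rfl fun i _ => hterm i, Finset.sum_const_zero,
          Real.zero_rpow hipne]
    have hmain := hconvexDual n v _ hcoordw
    refine hmain.trans ?_
    refine mul_le_of_le_one_right hKp ?_
    simp only [scalLpR]
    have hterm : ∀ i : Fin n, |‖v i‖| ^ p ≤ θ (es i : ιT) := by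
      intro i
      have hθi : 0 ≤ θ (es i : ιT) := hθ0 _ (es i).2
      rw [abs_norm]
      simp only [hv]
      have h1 : ‖∑ j : Fin m, b (es i : ιT) j • e' (j : ℕ)‖ ≤ 1 := (hbB _ (es i).2).2
      have h2 : ‖θ (es i : ιT) ^ (1/p) • ∑ j : Fin m, b (es i : ιT) j • e' (j : ℕ)‖
          ≤ θ (es i : ιT) ^ (1/p) := by
        refine (norm_smul_le (θ (es i : ιT) ^ (1/p)) (∑ j : Fin m, b (es i : ιT) j • e' (j : ℕ))).trans ?_
        rw [Real.norm_eq_abs, abs_of_nonneg (Real.rpow_nonneg hθi _)]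
        exact mul_le_of_le_one_right (Real.rpow_nonneg hθi _) h1
      calc ‖θ (es i : ιT) ^ (1/p) • ∑ j : Fin m, b (es i : ιT) j • e' (j : ℕ)‖ ^ p
          ≤ (θ (es i : ιT) ^ (1/p)) ^ p :=
            Real.rpow_le_rpow (norm_nonneg _) h2 hp0.le
        _ = θ (es i : ιT) := rpow_inv_cancel' hθi hpne
    have hsum : ∑ i : Fin n, |‖v i‖| ^ p ≤ 1 := by
      calc ∑ i : Fin n, |‖v i‖| ^ p ≤ ∑ i : Fin n, θ (es i : ιT) :=
            Finset.sum_le_sum fun i _ => hterm i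
        _ = ∑ i ∈ s, θ i := (hconv θ).symm
        _ = 1 := hθ1
    exact Real.rpow_le_one
      (Finset.sum_nonneg fun i _ => Real.rpow_nonneg (abs_nonneg _) _) hsum hip.le
  -- K3 : summing estimate against Bset
  have K3 : ∀ (μ : Fin m → ℝ), (∀ j, 0 ≤ μ j) → ∀ ε : ℝ, 0 < ε →
      ∃ β ∈ Bset, ∑ j : Fin m, μ j * c (j : ℕ) ^ p
        ≤ π ^ p * (∑ j : Fin m, μ j * β j ^ p) + ε := by
    intro μ hμ ε hε
    have hMu0 : 0 ≤ ∑ j : Fin m, μ j := Finset.sum_nonneg fun j _ => hμ j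
    set εj : ℝ := ε / (2 * ((∑ j : Fin m, μ j) + 1)) with hεj
    have hεjpos : 0 < εj := by positivity
    -- almost optimal families for each coordinate
    have hfam : ∀ j : Fin m, ∃ (nj : ℕ) (x : Fin nj → X (j : ℕ)),
        (∀ f : Module.Dual ℝ (X (j : ℕ)), (∀ u, |f u| ≤ ‖u‖) → ∑ i, |f (x i)| ^ p ≤ 1) ∧
        c (j : ℕ) ^ p - εj ≤ ∑ i, NZ (T (ι (j : ℕ) (x i))) ^ p := by
      intro j
      rcases eq_or_lt_of_le (c_nonneg (j : ℕ)) with hc0 | hcpos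
      · refine ⟨0, fun i => 0, fun f hf => by simp, ?_⟩
        rw [← hc0, Real.zero_rpow hpne]
        simp only [Finset.univ_eq_empty, Finset.sum_empty]
        linarith
      · set C := (max (c (j : ℕ) ^ p - εj) 0) ^ (1/p) with hC
        have hmax0 : (0:ℝ) ≤ max (c (j : ℕ) ^ p - εj) 0 := le_max_right _ _
        have hC0 : 0 ≤ C := Real.rpow_nonneg hmax0 _
        have hCp : C ^ p = max (c (j : ℕ) ^ p - εj) 0 := rpow_inv_cancel' hmax0 hpne
        have hClt : C < c (j : ℕ) := by
          have h1 : max (c (j : ℕ) ^ p - εj) 0 < c (j : ℕ) ^ p := by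
            apply max_lt
            · linarith
            · exact Real.rpow_pos_of_pos hcpos p
          have h2 := Real.rpow_lt_rpow hmax0 h1 hip
          rwa [rpow_cancel_inv' hcpos.le hpne] at h2
        obtain ⟨nj, x, hw, hs⟩ := c_extract (j : ℕ) C hC0 hClt
        refine ⟨nj, x, hw, ?_⟩
        calc c (j : ℕ) ^ p - εj ≤ max (c (j : ℕ) ^ p - εj) 0 := le_max_left _ _
          _ = C ^ p := hCp.symm
          _ ≤ ∑ i, NZ (T (ι (j : ℕ) (x i))) ^ p := hs.le
    choose nf xf hwf hsf using hfam
    set N := Finset.univ.sup nf with hN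
    have hnN : ∀ j, nf j ≤ N := fun j => Finset.le_sup (Finset.mem_univ j)
    set xp : ∀ j : Fin m, Fin N → X (j : ℕ) :=
      fun j i => if h : (i : ℕ) < nf j then xf j ⟨i, h⟩ else 0 with hxp
    -- padded families keep the two properties
    have hwp : ∀ (j : Fin m) (f : Module.Dual ℝ (X (j : ℕ))), (∀ u, |f u| ≤ ‖u‖) →
        ∑ i : Fin N, |f (xp j i)| ^ p ≤ 1 := by
      intro j f hf
      have h1 : ∑ i : Fin N, |f (xp j i)| ^ p
          = ∑ k ∈ Finset.range N, |f (if h : k < nf j then xf j ⟨k, h⟩ else 0)| ^ p := by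
        rw [← Fin.sum_univ_eq_sum_range (fun k => |f (if h : k < nf j then xf j ⟨k, h⟩ else 0)| ^ p) N]
      have h2 : ∑ k ∈ Finset.range (nf j), |f (if h : k < nf j then xf j ⟨k, h⟩ else 0)| ^ p
          = ∑ k ∈ Finset.range N, |f (if h : k < nf j then xf j ⟨k, h⟩ else 0)| ^ p := by
        refine Finset.sum_subset (Finset.range_subset_range.2 (hnN j)) fun k _ hk => ?_
        have hknf : ¬ k < nf j := fun h => hk (Finset.mem_range.2 h)
        rw [dif_neg hknf, map_zero, abs_zero, Real.zero_rpow hpne]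
      have h3 : ∑ k ∈ Finset.range (nf j), |f (if h : k < nf j then xf j ⟨k, h⟩ else 0)| ^ p
          = ∑ i : Fin (nf j), |f (xf j i)| ^ p := by
        rw [← Fin.sum_univ_eq_sum_range
          (fun k => |f (if h : k < nf j then xf j ⟨k, h⟩ else 0)| ^ p) (nf j)]
        exact Finset.sum_congr rfl fun i _ => by rw [dif_pos i.isLt]
      rw [h1, ← h2, h3]
      exact hwf j f hf
    have hsp : ∀ j : Fin m,
        c (j : ℕ) ^ p - εj ≤ ∑ i : Fin N, NZ (T (ι (j : ℕ) (xp j i))) ^ p := by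
      intro j
      have h1 : ∑ i : Fin N, NZ (T (ι (j : ℕ) (xp j i))) ^ p
          = ∑ k ∈ Finset.range N,
              NZ (T (ι (j : ℕ) (if h : k < nf j then xf j ⟨k, h⟩ else 0))) ^ p := by
        rw [← Fin.sum_univ_eq_sum_range
          (fun k => NZ (T (ι (j : ℕ) (if h : k < nf j then xf j ⟨k, h⟩ else 0))) ^ p) N]
      have h2 : ∑ k ∈ Finset.range (nf j),
            NZ (T (ι (j : ℕ) (if h : k < nf j then xf j ⟨k, h⟩ else 0))) ^ p
          = ∑ k ∈ Finset.range N,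
              NZ (T (ι (j : ℕ) (if h : k < nf j then xf j ⟨k, h⟩ else 0))) ^ p := by
        refine Finset.sum_subset (Finset.range_subset_range.2 (hnN j)) fun k _ hk => ?_
        have hknf : ¬ k < nf j := fun h => hk (Finset.mem_range.2 h)
        rw [dif_neg hknf, map_zero, map_zero, NZ0, Real.zero_rpow hpne]
      have h3 : ∑ k ∈ Finset.range (nf j),
            NZ (T (ι (j : ℕ) (if h : k < nf j then xf j ⟨k, h⟩ else 0))) ^ p
          = ∑ i : Fin (nf j), NZ (T (ι (j : ℕ) (xf j i))) ^ p := by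
        rw [← Fin.sum_univ_eq_sum_range
          (fun k => NZ (T (ι (j : ℕ) (if h : k < nf j then xf j ⟨k, h⟩ else 0))) ^ p) (nf j)]
        exact Finset.sum_congr rfl fun i _ => by rw [dif_pos i.isLt]
      rw [h1, ← h2, h3]
      exact hsf j
    -- Dp and Dq
    set Sp : Set ℝ := (fun β : Fin m → ℝ => ∑ j : Fin m, μ j * β j ^ p) '' Bset with hSpdef
    have hSpne : Sp.Nonempty := ⟨_, 0, hBset0, rfl⟩
    have hSpbdd : BddAbove Sp := by
      refine ⟨∑ j : Fin m, μ j, ?_⟩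
      rintro a ⟨β, hβ, rfl⟩
      refine Finset.sum_le_sum fun j _ => ?_
      calc μ j * β j ^ p ≤ μ j * 1 :=
            mul_le_mul_of_nonneg_left
              (Real.rpow_le_one (hβ.1 j) (hBle1 β hβ j) hp0.le) (hμ j)
        _ = μ j := mul_one _
    set Dp := sSup Sp with hDpdef
    have hDp0 : 0 ≤ Dp := by
      have h1 : (∑ j : Fin m, μ j * (0:ℝ) ^ p) ≤ Dp := le_csSup hSpbdd ⟨0, hBset0, rfl⟩
      have h2 : ∑ j : Fin m, μ j * (0:ℝ) ^ p = 0 := by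
        simp [Real.zero_rpow hpne]
      rw [h2] at h1
      exact h1
    set Dq := Dp ^ (1/p) with hDqdef
    have hDq0 : 0 ≤ Dq := Real.rpow_nonneg hDp0 _
    have hDqp : Dq ^ p = Dp := rpow_inv_cancel' hDp0 hpne
    -- the big family
    set y : Fin (m * N) → D := fun idx =>
      ι ((finProdFinEquiv.symm idx).1 : ℕ)
        ((μ (finProdFinEquiv.symm idx).1) ^ (1/p)
          • xp (finProdFinEquiv.symm idx).1 (finProdFinEquiv.symm idx).2) with hy
    have hsplitSum : ∀ (g : (Fin m × Fin N) → ℝ),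
        ∑ idx : Fin (m * N), g (finProdFinEquiv.symm idx) = ∑ j : Fin m, ∑ i : Fin N, g (j, i) := by
      intro g
      rw [Equiv.sum_comp finProdFinEquiv.symm g]
      exact Fintype.sum_prod_type g
    have hweakAll : ∀ f : Module.Dual ℝ D, (∀ u, |f u| ≤ ND u) →
        (∑ idx, |f (y idx)| ^ p) ^ (1/p) ≤ Dq := by
      intro f hf
      obtain ⟨β, hβB, hβ⟩ := K1' f hf
      have hsum : ∑ idx, |f (y idx)| ^ p
          = ∑ j : Fin m, ∑ i : Fin N, |f (ι (j : ℕ) ((μ j) ^ (1/p) • xp j i))| ^ p := by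
        exact hsplitSum fun pr => |f (ι (pr.1 : ℕ) ((μ pr.1) ^ (1/p) • xp pr.1 pr.2))| ^ p
      have hj : ∀ j : Fin m,
          ∑ i : Fin N, |f (ι (j : ℕ) ((μ j) ^ (1/p) • xp j i))| ^ p ≤ μ j * β j ^ p := by
        intro j
        have hμp : ((μ j) ^ (1/p)) ^ p = μ j := rpow_inv_cancel' (hμ j) hpne
        have hterm : ∀ i : Fin N,
            |f (ι (j : ℕ) ((μ j) ^ (1/p) • xp j i))| ^ p
              = μ j * |f (ι (j : ℕ) (xp j i))| ^ p := by
          intro i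
          rw [_root_.map_smul, _root_.map_smul, smul_eq_mul, abs_mul,
            Real.mul_rpow (abs_nonneg _) (abs_nonneg _),
            abs_of_nonneg (Real.rpow_nonneg (hμ j) _), hμp]
        rw [Finset.sum_congr rfl fun i _ => hterm i, ← Finset.mul_sum]
        refine mul_le_mul_of_nonneg_left ?_ (hμ j)
        rcases eq_or_lt_of_le (hβB.1 j) with hb0 | hbpos
        · have hz : ∀ i : Fin N, |f (ι (j : ℕ) (xp j i))| = 0 := by
            intro i
            have h2 := hβ j (xp j i)
            rw [← hb0, zero_mul] at h2
            exact le_antisymm h2 (abs_nonneg _)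
          calc ∑ i : Fin N, |f (ι (j : ℕ) (xp j i))| ^ p = 0 :=
                Finset.sum_eq_zero fun i _ => by rw [hz i, Real.zero_rpow hpne]
            _ ≤ β j ^ p := Real.rpow_nonneg (hβB.1 j) _
        · set h' : Module.Dual ℝ (X (j : ℕ)) := (β j)⁻¹ • (f.comp (ι (j : ℕ))) with hh'
          have hadm : ∀ u, |h' u| ≤ ‖u‖ := by
            intro u
            rw [hh', LinearMap.smul_apply, smul_eq_mul, abs_mul,
              abs_of_nonneg (inv_nonneg.2 (hβB.1 j))]
            rw [inv_mul_le_iff₀ hbpos]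
            exact hβ j u
          have hwp' := hwp j h' hadm
          have hterm2 : ∀ i : Fin N,
              |f (ι (j : ℕ) (xp j i))| ^ p = β j ^ p * |h' (xp j i)| ^ p := by
            intro i
            have heq : f (ι (j : ℕ) (xp j i)) = β j * h' (xp j i) := by
              rw [hh', LinearMap.smul_apply, smul_eq_mul, LinearMap.comp_apply, ← mul_assoc,
                mul_inv_cancel₀ hbpos.ne', one_mul]
            rw [heq, abs_mul, Real.mul_rpow (abs_nonneg _) (abs_nonneg _),
              abs_of_nonneg (hβB.1 j)]
          calc ∑ i : Fin N, |f (ι (j : ℕ) (xp j i))| ^ p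
              = β j ^ p * ∑ i : Fin N, |h' (xp j i)| ^ p := by
                rw [Finset.sum_congr rfl fun i _ => hterm2 i, ← Finset.mul_sum]
            _ ≤ β j ^ p * 1 :=
                mul_le_mul_of_nonneg_left hwp' (Real.rpow_nonneg (hβB.1 j) _)
            _ = β j ^ p := mul_one _
      have htot : ∑ idx, |f (y idx)| ^ p ≤ ∑ j : Fin m, μ j * β j ^ p := by
        rw [hsum]
        exact Finset.sum_le_sum fun j _ => hj j
      have h2 : ∑ idx, |f (y idx)| ^ p ≤ Dp := htot.trans (le_csSup hSpbdd ⟨β, hβB, rfl⟩)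
      have h3 : 0 ≤ ∑ idx, |f (y idx)| ^ p :=
        Finset.sum_nonneg fun idx _ => Real.rpow_nonneg (abs_nonneg _) _
      exact Real.rpow_le_rpow h3 h2 hip.le
    have hsummed := pi_bound (m * N) y Dq hDq0 hweakAll
    -- strong side
    have hstrongEq : ∑ idx, NZ (T (y idx)) ^ p
        = ∑ j : Fin m, μ j * ∑ i : Fin N, NZ (T (ι (j : ℕ) (xp j i))) ^ p := by
      have h1 : ∑ idx, NZ (T (y idx)) ^ p
          = ∑ j : Fin m, ∑ i : Fin N, NZ (T (ι (j : ℕ) ((μ j) ^ (1/p) • xp j i))) ^ p :=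
        hsplitSum fun pr => NZ (T (ι (pr.1 : ℕ) ((μ pr.1) ^ (1/p) • xp pr.1 pr.2))) ^ p
      rw [h1]
      refine Finset.sum_congr rfl fun j _ => ?_
      rw [Finset.mul_sum]
      refine Finset.sum_congr rfl fun i _ => ?_
      rw [_root_.map_smul, _root_.map_smul, NZsmul,
        abs_of_nonneg (Real.rpow_nonneg (hμ j) _),
        Real.mul_rpow (Real.rpow_nonneg (hμ j) _) (NZnn _),
        rpow_inv_cancel' (hμ j) hpne]
    have hstrongly : (∑ j : Fin m, μ j * c (j : ℕ) ^ p) - ε/2 ≤ ∑ idx, NZ (T (y idx)) ^ p := by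
      rw [hstrongEq]
      have h1 : ∀ j : Fin m, μ j * c (j : ℕ) ^ p - μ j * εj
          ≤ μ j * ∑ i : Fin N, NZ (T (ι (j : ℕ) (xp j i))) ^ p := fun j => by
        rw [← mul_sub]
        exact mul_le_mul_of_nonneg_left (hsp j) (hμ j)
      have h2 := Finset.sum_le_sum fun j (_ : j ∈ Finset.univ) => h1 j
      rw [Finset.sum_sub_distrib] at h2
      have h3 : (∑ j : Fin m, μ j * εj) ≤ ε/2 := by
        rw [← Finset.sum_mul, hεj]
        have hpos : (0:ℝ) < (∑ j : Fin m, μ j) + 1 := by linarith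
        calc (∑ j : Fin m, μ j) * (ε / (2 * ((∑ j : Fin m, μ j) + 1)))
            = ε * ((∑ j : Fin m, μ j) / (2 * ((∑ j : Fin m, μ j) + 1))) := by ring
          _ ≤ ε * (1/2) := by
              refine mul_le_mul_of_nonneg_left ?_ hε.le
              rw [div_le_div_iff₀ (by positivity) two_pos]
              linarith
          _ = ε/2 := by ring
      linarith
    have hsummedp : ∑ idx, NZ (T (y idx)) ^ p ≤ π ^ p * Dp := by
      have h0 : 0 ≤ ∑ idx, NZ (T (y idx)) ^ p :=
        Finset.sum_nonneg fun i _ => Real.rpow_nonneg (NZnn _) _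
      have h2 := Real.rpow_le_rpow (Real.rpow_nonneg h0 _) hsummed hp0.le
      rwa [rpow_inv_cancel' h0 hpne, Real.mul_rpow pi_nonneg hDq0, hDqp] at h2
    -- choose β near the sup
    set ε' := ε / (2 * (π ^ p + 1)) with hε'def
    have hπp0 : 0 ≤ π ^ p := Real.rpow_nonneg pi_nonneg _
    have hε'pos : 0 < ε' := by positivity
    obtain ⟨a, haSp, halt⟩ := exists_lt_of_lt_csSup hSpne (show Dp - ε' < Dp by linarith)
    obtain ⟨β, hβB, rfl⟩ := haSp
    refine ⟨β, hβB, ?_⟩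
    have hfin : π ^ p * Dp ≤ π ^ p * (∑ j : Fin m, μ j * β j ^ p) + ε/2 := by
      have h4 : Dp ≤ (∑ j : Fin m, μ j * β j ^ p) + ε' := by linarith
      have h5 : π ^ p * ε' ≤ ε/2 := by
        rw [hε'def]
        calc π ^ p * (ε / (2 * (π ^ p + 1))) = ε * (π ^ p / (2 * (π ^ p + 1))) := by ring
          _ ≤ ε * (1/2) := by
              refine mul_le_mul_of_nonneg_left ?_ hε.le
              rw [div_le_div_iff₀ (by positivity) two_pos]
              linarith
          _ = ε/2 := by ring
      calc π ^ p * Dp ≤ π ^ p * ((∑ j : Fin m, μ j * β j ^ p) + ε') :=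
            mul_le_mul_of_nonneg_left h4 hπp0
        _ = π ^ p * (∑ j : Fin m, μ j * β j ^ p) + π ^ p * ε' := by ring
        _ ≤ π ^ p * (∑ j : Fin m, μ j * β j ^ p) + ε/2 := by linarith
    linarith
  -- key separation estimate
  have key : ∀ (t : Fin m → ℝ) (R : ℝ), 0 ≤ R → (∀ j, 0 ≤ t j) →
      (∀ s : Fin m → ℝ, (∀ j, |s j| ≤ t j) → ‖∑ j : Fin m, s j • e (j : ℕ)‖ ≤ R) →
      ∑ j : Fin m, t j * c (j : ℕ) ≤ Kp * π * R := by
    intro t R hR ht hts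
    set Bp : Set (Fin m → ℝ) := (fun β : Fin m → ℝ => fun j => β j ^ p) '' Bset with hBpdef
    set sD : Set (Fin m → ℝ) :=
      {y | ∃ δ ∈ convexHull ℝ Bp, ∀ j, y j ≤ π ^ p * δ j} with hsDdef
    have hconvD : Convex ℝ sD := by
      rintro y₁ ⟨δ₁, hδ₁, hy₁⟩ y₂ ⟨δ₂, hδ₂, hy₂⟩ a b ha hb hab
      refine ⟨a • δ₁ + b • δ₂, (convex_convexHull ℝ Bp) hδ₁ hδ₂ ha hb hab, fun j => ?_⟩
      have h1 := add_le_add (mul_le_mul_of_nonneg_left (hy₁ j) ha)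
        (mul_le_mul_of_nonneg_left (hy₂ j) hb)
      simp only [Pi.add_apply, Pi.smul_apply, smul_eq_mul]
      calc a * y₁ j + b * y₂ j ≤ a * (π ^ p * δ₁ j) + b * (π ^ p * δ₂ j) := h1
        _ = π ^ p * (a * δ₁ j + b * δ₂ j) := by ring
    have h0Bp : (0 : Fin m → ℝ) ∈ Bp :=
      ⟨0, hBset0, by funext j; simp [Real.zero_rpow hpne]⟩
    set cp : Fin m → ℝ := fun j => c (j : ℕ) ^ p with hcpdef
    have hcpcl : cp ∈ closure sD := by
      by_contra hnot
      obtain ⟨φ, u, hsep, hu⟩ :=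
        geometric_hahn_banach_closed_point (hconvD.closure) isClosed_closure hnot
      set μ : Fin m → ℝ := fun j => φ (Pi.single j (1:ℝ) : Fin m → ℝ) with hμdef
      have hφ : ∀ y : Fin m → ℝ, φ y = ∑ j : Fin m, y j * μ j := by
        intro y
        have hy : y = ∑ j : Fin m, y j • (Pi.single j (1:ℝ) : Fin m → ℝ) := by
          funext k
          rw [Finset.sum_apply]
          have hterm : ∀ j : Fin m, (y j • (Pi.single j (1:ℝ) : Fin m → ℝ)) k = if k = j then y j else 0 := by
            intro j
            rw [Pi.smul_apply, Pi.single_apply, smul_eq_mul]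
            split <;> simp
          rw [Finset.sum_congr rfl fun j _ => hterm j, Finset.sum_ite_eq Finset.univ k y,
            if_pos (Finset.mem_univ k)]
        conv_lhs => rw [hy]
        rw [map_sum]
        exact Finset.sum_congr rfl fun j _ => by rw [_root_.map_smul, smul_eq_mul]
      have hμ0 : ∀ j, 0 ≤ μ j := by
        intro j
        by_contra hneg
        push_neg at hneg
        set R' := (|u| + 1) / (-μ j) with hR'
        have hμjne : μ j ≠ 0 := ne_of_lt hneg
        have hR'pos : 0 < R' := div_pos (by positivity) (by linarith)
        have hmem : (fun k => if k = j then -R' else 0) ∈ sD := by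
          refine ⟨0, subset_convexHull ℝ Bp h0Bp, fun k => ?_⟩
          simp only [Pi.zero_apply, mul_zero]
          split
          · linarith
          · exact le_refl 0
        have hlt := hsep _ (subset_closure hmem)
        rw [hφ] at hlt
        have heval : ∑ k : Fin m, (if k = j then -R' else 0) * μ k = -R' * μ j := by
          rw [Finset.sum_eq_single_of_mem j (Finset.mem_univ j)]
          · rw [if_pos rfl]
          · intro k _ hkj
            rw [if_neg hkj, zero_mul]
        rw [heval] at hlt
        have hval : -R' * μ j = |u| + 1 := by
          rw [hR', div_neg, neg_neg, div_mul_cancel₀ _ hμjne]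
        rw [hval] at hlt
        have := le_abs_self u
        linarith
      have hεs : 0 < (φ cp - u)/2 := by linarith
      obtain ⟨β, hβB, hK3⟩ := K3 μ hμ0 _ hεs
      have hmem2 : (fun j : Fin m => π ^ p * β j ^ p) ∈ sD :=
        ⟨fun j => β j ^ p, subset_convexHull ℝ Bp ⟨β, hβB, rfl⟩, fun j => le_refl _⟩
      have hlt2 := hsep _ (subset_closure hmem2)
      rw [hφ] at hlt2
      have hφq : (∑ j : Fin m, (π ^ p * β j ^ p) * μ j)
          = π ^ p * ∑ j : Fin m, μ j * β j ^ p := by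
        rw [Finset.mul_sum]
        exact Finset.sum_congr rfl fun j _ => by ring
      rw [hφq] at hlt2
      have hφcp : φ cp = ∑ j : Fin m, μ j * c (j : ℕ) ^ p := by
        rw [hφ]
        exact Finset.sum_congr rfl fun j _ => by rw [hcpdef]; ring
      linarith
    -- extract approximation
    refine le_of_forall_pos_le_add fun ε hε => ?_
    have hTt0 : 0 ≤ ∑ j : Fin m, t j := Finset.sum_nonneg fun j _ => ht j
    set ε₁ := (ε / ((∑ j : Fin m, t j) + 1)) ^ p with hε₁def
    have hε₁pos : 0 < ε₁ := Real.rpow_pos_of_pos (by positivity) _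
    obtain ⟨y, hymem, hydist⟩ := Metric.mem_closure_iff.1 hcpcl ε₁ hε₁pos
    obtain ⟨δ, hδhull, hyδ⟩ := hymem
    have hcoord : ∀ j : Fin m, c (j : ℕ) ^ p ≤ π ^ p * δ j + ε₁ := by
      intro j
      have h1 : dist (cp j) (y j) ≤ dist cp y := dist_le_pi_dist cp y j
      have h2 : cp j - y j ≤ ε₁ := by
        calc cp j - y j ≤ |cp j - y j| := le_abs_self _
          _ = dist (cp j) (y j) := (Real.dist_eq _ _).symm
          _ ≤ dist cp y := h1
          _ ≤ ε₁ := hydist.le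
      have h3 := hyδ j
      have h4 : cp j = c (j : ℕ) ^ p := rfl
      linarith
    rw [convexHull_eq] at hδhull
    obtain ⟨ιT, s, θ, z, hθ0, hθ1, hzB, hcenter⟩ := hδhull
    rw [Finset.centerMass_eq_of_sum_1 _ _ hθ1] at hcenter
    set B' : ιT → Fin m → ℝ :=
      fun i => if hi : i ∈ s then Classical.choose (hzB i hi) else 0 with hB'def
    have hB'B : ∀ i ∈ s, B' i ∈ Bset ∧ (fun j => (B' i j) ^ p) = z i := by
      intro i hi
      rw [hB'def]
      dsimp only
      rw [dif_pos hi]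
      obtain ⟨h1, h2⟩ := Classical.choose_spec (hzB i hi)
      exact ⟨h1, h2⟩
    have hδj : ∀ j : Fin m, δ j = ∑ i ∈ s, θ i * (B' i j) ^ p := by
      intro j
      rw [← hcenter, Finset.sum_apply]
      refine Finset.sum_congr rfl fun i hi => ?_
      rw [Pi.smul_apply, smul_eq_mul]
      congr 1
      exact (congrFun (hB'B i hi).2 j).symm
    set γ : Fin m → ℝ := fun j => (∑ i ∈ s, θ i * (B' i j) ^ p) ^ (1/p) with hγdef
    have hδnn : ∀ j : Fin m, 0 ≤ δ j := by
      intro j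
      rw [hδj j]
      exact Finset.sum_nonneg fun i hi =>
        mul_nonneg (hθ0 i hi) (Real.rpow_nonneg ((hB'B i hi).1.1 j) _)
    have hγnn : ∀ j, 0 ≤ γ j := fun j => Real.rpow_nonneg (by rw [← hδj j]; exact hδnn j) _
    have hγp : ∀ j : Fin m, γ j ^ p = δ j := by
      intro j
      rw [hγdef]
      dsimp only
      rw [rpow_inv_cancel' (by rw [← hδj j]; exact hδnn j) hpne, hδj j]
    have hgγ := K2 s θ B' hθ0 hθ1 fun i hi => (hB'B i hi).1
    have hpair : ∑ j : Fin m, t j * γ j ≤ Kp * R := by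
      have hx : ‖∑ j : Fin m, t j • e (j : ℕ)‖ ≤ R :=
        hts t fun j => by rw [abs_of_nonneg (ht j)]
      have happ : (∑ j : Fin m, γ j • e' (j : ℕ)) (∑ j : Fin m, t j • e (j : ℕ))
          = ∑ j : Fin m, γ j * t j := by
        rw [ContinuousLinearMap.sum_apply]
        refine Finset.sum_congr rfl fun j _ => ?_
        rw [ContinuousLinearMap.smul_apply, smul_eq_mul, coordOfSum, dif_pos j.isLt]
      have hγsum : ∑ j : Fin m, γ j • e' (j : ℕ)
          = ∑ j : Fin m, (∑ i ∈ s, θ i * B' i j ^ p) ^ (1/p) • e' (j : ℕ) := rfl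
      calc ∑ j : Fin m, t j * γ j
          = (∑ j : Fin m, γ j • e' (j : ℕ)) (∑ j : Fin m, t j • e (j : ℕ)) := by
            rw [happ]
            exact Finset.sum_congr rfl fun j _ => mul_comm _ _
        _ ≤ |(∑ j : Fin m, γ j • e' (j : ℕ)) (∑ j : Fin m, t j • e (j : ℕ))| := le_abs_self _
        _ = ‖(∑ j : Fin m, γ j • e' (j : ℕ)) (∑ j : Fin m, t j • e (j : ℕ))‖ :=
            (Real.norm_eq_abs _).symm
        _ ≤ ‖∑ j : Fin m, γ j • e' (j : ℕ)‖ * ‖∑ j : Fin m, t j • e (j : ℕ)‖ :=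
            ContinuousLinearMap.le_opNorm _ _
        _ ≤ Kp * R := by
            refine mul_le_mul ?_ hx (norm_nonneg _) hKp
            rw [hγsum]
            exact hgγ
    have hπp0' : 0 ≤ π ^ p := Real.rpow_nonneg pi_nonneg _
    have hcj : ∀ j : Fin m, c (j : ℕ) ≤ π * γ j + ε / ((∑ j : Fin m, t j) + 1) := by
      intro j
      have h1 : c (j : ℕ) ^ p ≤ π ^ p * γ j ^ p + ε₁ := by
        rw [hγp j]
        exact hcoord j
      have hc0 : 0 ≤ c (j : ℕ) := c_nonneg _
      have h2 : c (j : ℕ) = (c (j : ℕ) ^ p) ^ (1/p) := (rpow_cancel_inv' hc0 hpne).symm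
      rw [h2]
      calc (c (j : ℕ) ^ p) ^ (1/p) ≤ (π ^ p * γ j ^ p + ε₁) ^ (1/p) :=
            Real.rpow_le_rpow (Real.rpow_nonneg hc0 _) h1 hip.le
        _ ≤ (π ^ p * γ j ^ p) ^ (1/p) + ε₁ ^ (1/p) := by
            refine real_add_rpow_le' (mul_nonneg hπp0' (Real.rpow_nonneg (hγnn j) _))
              hε₁pos.le hip.le ?_
            rw [div_le_one hp0]
            exact hp
        _ = π * γ j + ε / ((∑ j : Fin m, t j) + 1) := by
            rw [Real.mul_rpow hπp0' (Real.rpow_nonneg (hγnn j) _),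
              rpow_cancel_inv' pi_nonneg hpne, rpow_cancel_inv' (hγnn j) hpne, hε₁def,
              rpow_cancel_inv' (by positivity) hpne]
    calc ∑ j : Fin m, t j * c (j : ℕ)
        ≤ ∑ j : Fin m, t j * (π * γ j + ε / ((∑ j : Fin m, t j) + 1)) :=
          Finset.sum_le_sum fun j _ => mul_le_mul_of_nonneg_left (hcj j) (ht j)
      _ = π * (∑ j : Fin m, t j * γ j)
            + (∑ j : Fin m, t j) * (ε / ((∑ j : Fin m, t j) + 1)) := by
          rw [Finset.mul_sum, Finset.sum_mul, ← Finset.sum_add_distrib]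
          exact Finset.sum_congr rfl fun j _ => by ring
      _ ≤ π * (Kp * R) + (∑ j : Fin m, t j) * (ε / ((∑ j : Fin m, t j) + 1)) := by
          have := mul_le_mul_of_nonneg_left hpair pi_nonneg
          linarith
      _ ≤ Kp * π * R + ε := by
          have h5 : (∑ j : Fin m, t j) * (ε / ((∑ j : Fin m, t j) + 1)) ≤ ε := by
            calc (∑ j : Fin m, t j) * (ε / ((∑ j : Fin m, t j) + 1))
                = ε * ((∑ j : Fin m, t j) / ((∑ j : Fin m, t j) + 1)) := by ring
              _ ≤ ε * 1 := by
                  refine mul_le_mul_of_nonneg_left ?_ hε.le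
                  rw [div_le_one (by linarith)]
                  linarith
              _ = ε := mul_one ε
          have h6 : π * (Kp * R) = Kp * π * R := by ring
          linarith
  -- final assembly
  have goalKey : ‖∑ j ∈ Finset.range m, c j • e' j‖ ≤ Kp * π := by
    refine ContinuousLinearMap.opNorm_le_bound _ (mul_nonneg hKp pi_nonneg) fun x => ?_
    have hsum : (∑ j ∈ Finset.range m, c j • e' j) x = ∑ j ∈ Finset.range m, c j * e' j x := by
      rw [ContinuousLinearMap.sum_apply]
      exact Finset.sum_congr rfl fun j _ => by
        rw [ContinuousLinearMap.smul_apply, smul_eq_mul]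
    rw [Real.norm_eq_abs, hsum]
    have h1 : |∑ j ∈ Finset.range m, c j * e' j x| ≤ ∑ j : Fin m, |e' (j : ℕ) x| * c (j : ℕ) := by
      calc |∑ j ∈ Finset.range m, c j * e' j x| ≤ ∑ j ∈ Finset.range m, |c j * e' j x| :=
            Finset.abs_sum_le_sum_abs _ _
        _ = ∑ j ∈ Finset.range m, c j * |e' j x| :=
            Finset.sum_congr rfl fun j _ => by rw [abs_mul, abs_of_nonneg (c_nonneg j)]
        _ = ∑ j : Fin m, c (j : ℕ) * |e' (j : ℕ) x| :=
            (Fin.sum_univ_eq_sum_range (fun j => c j * |e' j x|) m).symm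
        _ = ∑ j : Fin m, |e' (j : ℕ) x| * c (j : ℕ) :=
            Finset.sum_congr rfl fun j _ => mul_comm _ _
    have h2 : ∑ j : Fin m, |e' (j : ℕ) x| * c (j : ℕ) ≤ Kp * π * ‖x‖ := by
      refine key (fun j => |e' (j : ℕ) x|) ‖x‖ (norm_nonneg x) (fun j => abs_nonneg _)
        fun s hs => ?_
      have hconv : ∑ j : Fin m, s j • e (j : ℕ)
          = ∑ k ∈ Finset.range m, (if h : k < m then s ⟨k, h⟩ else 0) • e k := by
        rw [← Fin.sum_univ_eq_sum_range (fun k => (if h : k < m then s ⟨k, h⟩ else 0) • e k) m]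
        exact Finset.sum_congr rfl fun j _ => by rw [dif_pos j.isLt]
      rw [hconv]
      refine coordBound x _ (Finset.range m) fun n => ?_
      by_cases hn : n < m
      · rw [dif_pos hn]
        exact hs ⟨n, hn⟩
      · rw [dif_neg hn, abs_zero]
        exact abs_nonneg _
    linarith
  exact goalKey

end
end
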